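/- arXiv:math/0310150 — 9 statements merged into one kernel-verified Lean document; each statement's English description precedes it below -/
import Mathlib

section
/- Let G be a finite abelian group and a_1, ..., a_r elements of G generating G with a_1 + ... + a_r = 0, where r ≥ 4 and the orders m_1 ≤ m_2 ≤ ... ≤ m_r of the a_i satisfy (m_1,m_2,m_3,m_4) = (2,2,3,3) when r = 4. Then G is cyclic of order 6. -/
/-- If a finite abelian group `G` is generated by four elements of orders
`(2,2,3,3)` whose sum is zero, then `G` is cyclic of order `6`. -/
theorem stmt_0 {G : Type*} [AddCommGroup G] [Fintype G]
    (a : Fin 4 → G)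
    (hgen : AddSubgroup.closure (Set.range a) = ⊤)
    (hsum : a 0 + a 1 + a 2 + a 3 = 0)
    (h0 : addOrderOf (a 0) = 2) (h1 : addOrderOf (a 1) = 2)
    (h2 : addOrderOf (a 2) = 3) (h3 : addOrderOf (a 3) = 3) :
    IsAddCyclic G ∧ Fintype.card G = 6 := by
  have hxx : a 0 + a 0 = 0 := by
    have := addOrderOf_nsmul_eq_zero (a 0)
    rw [h0, show (2:ℕ) • a 0 = a 0 + a 0 from by abel] at this; exact this
  have hyy : a 1 + a 1 = 0 := by
    have := addOrderOf_nsmul_eq_zero (a 1)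
    rw [h1, show (2:ℕ) • a 1 = a 1 + a 1 from by abel] at this; exact this
  have huu : a 2 + a 2 + a 2 = 0 := by
    have := addOrderOf_nsmul_eq_zero (a 2)
    rw [h2, show (3:ℕ) • a 2 = a 2 + a 2 + a 2 from by abel] at this; exact this
  have hvv : a 3 + a 3 + a 3 = 0 := by
    have := addOrderOf_nsmul_eq_zero (a 3)
    rw [h3, show (3:ℕ) • a 3 = a 3 + a 3 + a 3 from by abel] at this; exact this
  have h2s : (a 0 + a 1) + (a 0 + a 1) = 0 := by
    calc (a 0 + a 1) + (a 0 + a 1) = (a 0 + a 0) + (a 1 + a 1) := by abel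
    _ = 0 := by rw [hxx, hyy, add_zero]
  have h3s : (a 0 + a 1) + (a 0 + a 1) + (a 0 + a 1) = 0 := by
    calc (a 0 + a 1) + (a 0 + a 1) + (a 0 + a 1)
        = (a 0 + a 1 + a 2 + a 3) + (a 0 + a 1 + a 2 + a 3) + (a 0 + a 1 + a 2 + a 3)
          - ((a 2 + a 2 + a 2) + (a 3 + a 3 + a 3)) := by abel
    _ = 0 := by rw [hsum, huu, hvv]; simp
  have hs : a 0 + a 1 = 0 := by rwa [h2s, zero_add] at h3s
  have huv : a 2 + a 3 = 0 := by
    have h' : (a 0 + a 1) + (a 2 + a 3) = 0 := by rw [← hsum]; abel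
    rwa [hs, zero_add] at h'
  have hy : a 1 = a 0 := by
    have h1' : a 1 = -(a 0) := eq_neg_of_add_eq_zero_right hs
    rw [h1', neg_eq_of_add_eq_zero_right hxx]
  have hv : a 3 = -(a 2) := eq_neg_of_add_eq_zero_right huv
  set g := a 0 + a 2 with hgdef
  have hg3 : g + g + g = a 0 := by
    calc g + g + g = (a 0 + a 0) + a 0 + (a 2 + a 2 + a 2) := by rw [hgdef]; abel
    _ = a 0 := by rw [hxx, huu, zero_add, add_zero]
  have hg2 : g + g = a 3 := by
    have h' : g + g = (a 0 + a 0) + (a 2 + a 2) := by rw [hgdef]; abel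
    rw [h', hxx, zero_add, hv, ← eq_neg_of_add_eq_zero_left huu]
  have hg4 : g + g + g + g = a 2 := by
    rw [hg3, hgdef]
    calc a 0 + (a 0 + a 2) = (a 0 + a 0) + a 2 := by abel
    _ = a 2 := by rw [hxx, zero_add]
  -- g generates G
  have hmemg : ∀ z : G, z ∈ AddSubgroup.zmultiples g := by
    have htop : AddSubgroup.zmultiples g = ⊤ := by
      rw [eq_top_iff, ← hgen, AddSubgroup.closure_le]
      rintro z ⟨i, rfl⟩
      have hgmem : g ∈ AddSubgroup.zmultiples g := AddSubgroup.mem_zmultiples g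
      fin_cases i
      · exact hg3 ▸ add_mem (add_mem hgmem hgmem) hgmem
      · exact hy ▸ hg3 ▸ add_mem (add_mem hgmem hgmem) hgmem
      · exact hg4 ▸ add_mem (add_mem (add_mem hgmem hgmem) hgmem) hgmem
      · exact hg2 ▸ add_mem hgmem hgmem
    intro z; rw [htop]; trivial
  have hcyc : IsAddCyclic G := ⟨g, hmemg⟩
  refine ⟨hcyc, ?_⟩
  have hcard : addOrderOf g = Nat.card G :=
    addOrderOf_eq_card_of_forall_mem_zmultiples hmemg
  have hdvd6 : addOrderOf g ∣ 6 := by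
    apply addOrderOf_dvd_of_nsmul_eq_zero
    rw [show (6:ℕ) • g = (g + g + g) + (g + g + g) from by abel, hg3, hxx]
  have hd2 : 2 ∣ addOrderOf g := by
    rw [← h0]
    exact addOrderOf_dvd_of_mem_zmultiples (hg3 ▸ add_mem (add_mem
      (AddSubgroup.mem_zmultiples g) (AddSubgroup.mem_zmultiples g))
      (AddSubgroup.mem_zmultiples g))
  have hd3 : 3 ∣ addOrderOf g := by
    rw [← h2]
    have hgm := AddSubgroup.mem_zmultiples g
    exact addOrderOf_dvd_of_mem_zmultiples
      (hg4 ▸ add_mem (add_mem (add_mem hgm hgm) hgm) hgm)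
  have h6 : addOrderOf g = 6 := by
    have h6d : 6 ∣ addOrderOf g := Nat.Coprime.mul_dvd_of_dvd_of_dvd (by norm_num) hd2 hd3
    exact Nat.dvd_antisymm hdvd6 h6d
  rw [← Nat.card_eq_fintype_card, ← hcard, h6]
end

section
/- Let G = (Z/2Z)^2 ⊕ (Z/4Z). If a_1,...,a_r generate G and b_1,...,b_s generate G, then there exists a nonzero element g lying in both the union of the cyclic subgroups ⟨a_i⟩ and the union of the cyclic subgroups ⟨b_j⟩. -/
lemma stmt_5_aux {n : ℕ} (c : Fin n → (ZMod 2 × ZMod 2) × ZMod 4)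
    (hc : AddSubgroup.closure (Set.range c) = ⊤) :
    ∃ i, (2 : ℤ) • c i = ((0, 0), 2) := by
  by_contra h
  push_neg at h
  have hsmul : ∀ i, (2 : ℤ) • c i = (((2:ℤ) • (c i).1.1, (2:ℤ) • (c i).1.2), (2:ℤ) • (c i).2) :=
    fun i => rfl
  have h2 : ∀ x : ZMod 2, (2 : ℤ) • x = 0 := by decide
  have h4 : ∀ x : ZMod 4, x = 1 ∨ x = 3 → (2:ℤ) • x = 2 := by decide
  have hmem : ∀ i, (c i).2 ∈ AddSubgroup.zmultiples (2 : ZMod 4) := by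
    intro i
    have hne : ¬((c i).2 = 1 ∨ (c i).2 = 3) := by
      intro he
      exact h i (by rw [hsmul i, h2, h2, h4 _ he])
    have : (c i).2 = 0 ∨ (c i).2 = 2 := by
      revert hne; generalize (c i).2 = x; revert x; decide
    rcases this with he | he
    · rw [he]; exact zero_mem _
    · rw [he]; exact AddSubgroup.mem_zmultiples _
  have hle : AddSubgroup.closure (Set.range c) ≤
      (AddSubgroup.zmultiples (2 : ZMod 4)).comap
        ((AddMonoidHom.snd (ZMod 2 × ZMod 2) (ZMod 4))) := by
    rw [AddSubgroup.closure_le]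
    rintro x ⟨i, rfl⟩
    exact hmem i
  rw [hc] at hle
  have : (1 : ZMod 4) ∈ AddSubgroup.zmultiples (2 : ZMod 4) :=
    hle (AddSubgroup.mem_top (((0, 0), 1) : (ZMod 2 × ZMod 2) × ZMod 4))
  obtain ⟨m, hm⟩ := this
  have h4' : ∀ x : ZMod 4, x * 2 ≠ 1 := by decide
  exact h4' m (by rw [← zsmul_eq_mul]; exact_mod_cast hm)

/-- In `G = (ℤ/2)² ⊕ ℤ/4`, for any two generating families `a₁, …, a_r` and
`b₁, …, b_s` there is a nonzero element lying both in some `⟨a_i⟩` and in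
some `⟨b_j⟩`. -/
theorem stmt_5 {r s : ℕ}
    (a : Fin r → (ZMod 2 × ZMod 2) × ZMod 4) (b : Fin s → (ZMod 2 × ZMod 2) × ZMod 4)
    (ha : AddSubgroup.closure (Set.range a) = ⊤)
    (hb : AddSubgroup.closure (Set.range b) = ⊤) :
    ∃ g : (ZMod 2 × ZMod 2) × ZMod 4, g ≠ 0 ∧
      (∃ i, g ∈ AddSubgroup.zmultiples (a i)) ∧ (∃ j, g ∈ AddSubgroup.zmultiples (b j)) := by
  obtain ⟨i, hi⟩ := stmt_5_aux a ha
  obtain ⟨j, hj⟩ := stmt_5_aux b hb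
  exact ⟨((0, 0), 2), by decide, ⟨i, ⟨2, hi⟩⟩, ⟨j, ⟨2, hj⟩⟩⟩
end

section
/- There do not exist two triples (a_1,a_2,a_3) and (b_1,b_2,b_3) of generators of G = (Z/4Z)^2 with a_1+a_2+a_3 = 0 and b_1+b_2+b_3 = 0 such that (⟨a_1⟩∪⟨a_2⟩∪⟨a_3⟩) ∩ (⟨b_1⟩∪⟨b_2⟩∪⟨b_3⟩) = {0}. -/
/-- Finite case check: for any triple in `(ℤ/4)²` with sum zero, either some
member doubles to `(2,2)`, or all members have even first coordinate, or all
have even second coordinate. -/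
lemma key_cases : ∀ x y z : ZMod 4 × ZMod 4, x + y + z = 0 →
    (x + x = ((2 : ZMod 4), (2 : ZMod 4)) ∨ y + y = (2, 2) ∨ z + z = (2, 2)) ∨
    (2 * x.1 = 0 ∧ 2 * y.1 = 0 ∧ 2 * z.1 = 0) ∨
    (2 * x.2 = 0 ∧ 2 * y.2 = 0 ∧ 2 * z.2 = 0) := by decide

lemma exists_double (a : Fin 3 → ZMod 4 × ZMod 4)
    (ha : AddSubgroup.closure (Set.range a) = ⊤)
    (hs : a 0 + a 1 + a 2 = 0) :
    ∃ i, a i + a i = ((2 : ZMod 4), (2 : ZMod 4)) := by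
  rcases key_cases (a 0) (a 1) (a 2) hs with (h | h | h) | h | h
  · exact ⟨0, h⟩
  · exact ⟨1, h⟩
  · exact ⟨2, h⟩
  · exfalso
    set f : ZMod 4 × ZMod 4 →+ ZMod 4 :=
      (AddMonoidHom.mulLeft (2 : ZMod 4)).comp (AddMonoidHom.fst _ _) with hf
    have hle : AddSubgroup.closure (Set.range a) ≤ f.ker := by
      rw [AddSubgroup.closure_le]
      rintro _ ⟨i, rfl⟩
      fin_cases i <;> simp [f, AddMonoidHom.mem_ker, h.1, h.2.1, h.2.2]
    rw [ha] at hle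
    have : ((1 : ZMod 4), (0 : ZMod 4)) ∈ f.ker := hle (AddSubgroup.mem_top _)
    rw [AddMonoidHom.mem_ker] at this
    simp [f] at this
    exact absurd this (by decide)
  · exfalso
    set f : ZMod 4 × ZMod 4 →+ ZMod 4 :=
      (AddMonoidHom.mulLeft (2 : ZMod 4)).comp (AddMonoidHom.snd _ _) with hf
    have hle : AddSubgroup.closure (Set.range a) ≤ f.ker := by
      rw [AddSubgroup.closure_le]
      rintro _ ⟨i, rfl⟩
      fin_cases i <;> simp [f, AddMonoidHom.mem_ker, h.1, h.2.1, h.2.2]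
    rw [ha] at hle
    have : ((0 : ZMod 4), (1 : ZMod 4)) ∈ f.ker := hle (AddSubgroup.mem_top _)
    rw [AddMonoidHom.mem_ker] at this
    simp [f] at this
    exact absurd this (by decide)

lemma mem_union_of_double (a : Fin 3 → ZMod 4 × ZMod 4)
    (h : ∃ i, a i + a i = ((2 : ZMod 4), (2 : ZMod 4))) :
    ((2 : ZMod 4), (2 : ZMod 4)) ∈
      ⋃ i, (AddSubgroup.zmultiples (a i) : Set (ZMod 4 × ZMod 4)) := by
  obtain ⟨i, hi⟩ := h
  refine Set.mem_iUnion.2 ⟨i, ?_⟩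
  exact ⟨2, by show (2 : ℤ) • a i = _; rw [two_zsmul]; exact hi⟩

/-- There are no two triples of generators of `G = (ℤ/4)²`, each with sum zero,
such that the unions of the cyclic subgroups generated by the members of the
two triples meet only in `0`. -/
theorem stmt_7 :
    ¬ ∃ a b : Fin 3 → ZMod 4 × ZMod 4,
      AddSubgroup.closure (Set.range a) = ⊤ ∧
      AddSubgroup.closure (Set.range b) = ⊤ ∧
      a 0 + a 1 + a 2 = 0 ∧ b 0 + b 1 + b 2 = 0 ∧
      (⋃ i, (AddSubgroup.zmultiples (a i) : Set (ZMod 4 × ZMod 4))) ∩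
        (⋃ j, (AddSubgroup.zmultiples (b j) : Set (ZMod 4 × ZMod 4))) = {0} := by
  rintro ⟨a, b, ha, hb, hsa, hsb, hinter⟩
  have hma := mem_union_of_double a (exists_double a ha hsa)
  have hmb := mem_union_of_double b (exists_double b hb hsb)
  have : ((2 : ZMod 4), (2 : ZMod 4)) ∈ ({0} : Set (ZMod 4 × ZMod 4)) := by
    rw [← hinter]; exact ⟨hma, hmb⟩
  rw [Set.mem_singleton_iff] at this
  exact absurd this (by decide)
end

section
/- Let G = (Z/2Z)^4 with basis e_1,...,e_4 and e = e_1+e_2+e_3+e_4. Suppose v_1,...,v_5 ∈ G satisfy: (i) v_1 + ... + v_5 = 0; (ii) v_1,...,v_5 span G; (iii) each v_i has Hamming weight 2 or 3 with respect to the basis. Then exactly two of the v_i have weight 3. -/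
/-- Auxiliary: the weight-3 vector whose unique zero coordinate is `p`. -/
def w3 (p : Fin 4) : Fin 4 → ZMod 2 := fun m => if m = p then 0 else 1

lemma wt_sum (x : Fin 4 → ZMod 2) :
    (∑ j, x j) = (((Finset.univ.filter fun j => x j ≠ 0).card : ℕ) : ZMod 2) := by
  revert x; decide

lemma wt3_eq (x : Fin 4 → ZMod 2)
    (h : (Finset.univ.filter fun j => x j ≠ 0).card = 3) : ∃ p, x = w3 p := by
  revert x; decide

lemma w3_sum (p : Fin 4) : (∑ j, w3 p j) = 1 := by revert p; decide

lemma w3_apply_ne (p l : Fin 4) (h : l ≠ p) : w3 p l = 1 := by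
  simp [w3, h]

lemma w3_apply_self (p : Fin 4) : w3 p p = 0 := by simp [w3]

lemma key4 (p q r t : Fin 4) (s : Fin 4 → ZMod 2)
    (h : w3 p + w3 q + w3 r + w3 t + s = 0)
    (hs : (Finset.univ.filter fun j => s j ≠ 0).card = 2) :
    ∃ l, l ≠ p ∧ l ≠ q ∧ l ≠ r ∧ l ≠ t ∧ s l = 0 := by
  revert p q r t s; decide

/-- Given four weight-3 vectors and a weight-2 vector summing to zero, there is
a nonzero functional vanishing on all of them. -/
lemma keyA (a b c d s : Fin 4 → ZMod 2)
    (ha : (Finset.univ.filter fun j => a j ≠ 0).card = 3)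
    (hb : (Finset.univ.filter fun j => b j ≠ 0).card = 3)
    (hc : (Finset.univ.filter fun j => c j ≠ 0).card = 3)
    (hd : (Finset.univ.filter fun j => d j ≠ 0).card = 3)
    (hs : (Finset.univ.filter fun j => s j ≠ 0).card = 2)
    (h : a + b + c + d + s = 0) :
    ∃ g : (Fin 4 → ZMod 2) →ₗ[ZMod 2] ZMod 2,
      g ≠ 0 ∧ g a = 0 ∧ g b = 0 ∧ g c = 0 ∧ g d = 0 ∧ g s = 0 := by
  obtain ⟨p, rfl⟩ := wt3_eq a ha
  obtain ⟨q, rfl⟩ := wt3_eq b hb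
  obtain ⟨r, rfl⟩ := wt3_eq c hc
  obtain ⟨t, rfl⟩ := wt3_eq d hd
  obtain ⟨l, hlp, hlq, hlr, hlt, hsl⟩ := key4 p q r t s h hs
  refine ⟨(LinearMap.proj l : (Fin 4 → ZMod 2) →ₗ[ZMod 2] ZMod 2) +
      ∑ j : Fin 4, (LinearMap.proj j : (Fin 4 → ZMod 2) →ₗ[ZMod 2] ZMod 2),
      ?_, ?_, ?_, ?_, ?_, ?_⟩
  · intro h0
    have := congrArg (fun φ : (Fin 4 → ZMod 2) →ₗ[ZMod 2] ZMod 2 => φ (w3 l)) h0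
    simp only [LinearMap.add_apply, LinearMap.sum_apply, LinearMap.proj_apply,
      LinearMap.zero_apply, w3_sum, w3_apply_self, zero_add] at this
    exact one_ne_zero this
  all_goals
    simp only [LinearMap.add_apply, LinearMap.sum_apply, LinearMap.proj_apply, w3_sum]
  · rw [w3_apply_ne p l hlp]; decide
  · rw [w3_apply_ne q l hlq]; decide
  · rw [w3_apply_ne r l hlr]; decide
  · rw [w3_apply_ne t l hlt]; decide
  · rw [hsl, wt_sum s, hs]; decide

/-- In `G = (ℤ/2)⁴`, if `v₁, …, v₅` have sum zero, span `G`, and each has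
Hamming weight `2` or `3`, then exactly two of them have weight `3`. -/
theorem stmt_11 (v : Fin 5 → (Fin 4 → ZMod 2))
    (hsum : v 0 + v 1 + v 2 + v 3 + v 4 = 0)
    (hspan : Submodule.span (ZMod 2) (Set.range v) = ⊤)
    (hw : ∀ i, (Finset.univ.filter fun j => v i j ≠ 0).card = 2 ∨
               (Finset.univ.filter fun j => v i j ≠ 0).card = 3) :
    (Finset.univ.filter fun i =>
      (Finset.univ.filter fun j => v i j ≠ 0).card = 3).card = 2 := by
  classical
  set wt : (Fin 4 → ZMod 2) → ℕ :=
    fun x => (Finset.univ.filter fun j => x j ≠ 0).card with hwt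
  set S : Finset (Fin 5) := Finset.univ.filter (fun i => wt (v i) = 3) with hS
  -- any functional vanishing on all `v i` is zero
  have hzero : ∀ g : (Fin 4 → ZMod 2) →ₗ[ZMod 2] ZMod 2,
      (∀ i, g (v i) = 0) → g = 0 := by
    intro g hg
    have hle : Submodule.span (ZMod 2) (Set.range v) ≤ LinearMap.ker g :=
      Submodule.span_le.mpr (by rintro x ⟨i, rfl⟩; exact hg i)
    rw [hspan, top_le_iff] at hle
    exact LinearMap.ker_eq_top.mp hle
  -- parity: (S.card : ZMod 2) = 0
  have hsum' : ∑ i : Fin 5, v i = 0 := by rw [Fin.sum_univ_five]; exact hsum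
  have hpar : ((S.card : ℕ) : ZMod 2) = 0 := by
    have h1 : ∀ i : Fin 5, ((wt (v i) : ℕ) : ZMod 2) = if i ∈ S then 1 else 0 := by
      intro i
      rcases hw i with h | h
      · have hns : i ∉ S := by simp [hS, hwt, h]
        rw [if_neg hns]
        show (((Finset.univ.filter fun j => v i j ≠ 0).card : ℕ) : ZMod 2) = 0
        rw [h]; decide
      · have hin : i ∈ S := by simp [hS, hwt, h]
        rw [if_pos hin]
        show (((Finset.univ.filter fun j => v i j ≠ 0).card : ℕ) : ZMod 2) = 1
        rw [h]; decide
    have h2 : ∑ i : Fin 5, ((wt (v i) : ℕ) : ZMod 2) = (S.card : ZMod 2) := by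
      rw [Finset.sum_congr rfl (fun i _ => h1 i), Finset.sum_ite_mem,
        Finset.univ_inter, Finset.sum_const, nsmul_eq_mul, mul_one]
    have h3 : ∑ i : Fin 5, ((wt (v i) : ℕ) : ZMod 2) = 0 := by
      have : ∀ i : Fin 5, ((wt (v i) : ℕ) : ZMod 2) = ∑ j, v i j := by
        intro i; rw [hwt, ← wt_sum]
      rw [Finset.sum_congr rfl (fun i _ => this i), Finset.sum_comm]
      have : ∀ j : Fin 4, ∑ i : Fin 5, v i j = 0 := by
        intro j
        have := congrFun hsum' j
        simpa [Finset.sum_apply] using this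
      simp [this]
    rw [← h2, h3]
  -- S.card ≤ 5
  have hk5 : S.card ≤ 5 := by
    have := Finset.card_filter_le (Finset.univ : Finset (Fin 5))
      (fun i => wt (v i) = 3)
    simpa [hS] using this
  -- rule out S.card = 0
  have hk0 : S.card ≠ 0 := by
    intro h0
    have hall : ∀ i, wt (v i) = 2 := by
      intro i
      rcases hw i with h | h
      · exact h
      · exfalso
        have : i ∈ S := by simp [hS, hwt, h]
        rw [Finset.card_eq_zero] at h0
        simp [h0] at this
    have hg : ∀ i, (∑ j : Fin 4, LinearMap.proj (R := ZMod 2)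
        (φ := fun _ : Fin 4 => ZMod 2) j) (v i) = 0 := by
      intro i
      simp only [LinearMap.sum_apply, LinearMap.proj_apply]
      rw [wt_sum (v i)]
      rw [show (Finset.univ.filter fun j => v i j ≠ 0).card = 2 from hall i]
      decide
    have := hzero _ hg
    have h1 := congrArg (fun φ : (Fin 4 → ZMod 2) →ₗ[ZMod 2] ZMod 2 => φ (w3 0)) this
    simp only [LinearMap.sum_apply, LinearMap.proj_apply, LinearMap.zero_apply,
      w3_sum] at h1
    exact one_ne_zero h1
  -- rule out S.card = 4
  have hk4 : S.card ≠ 4 := by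
    intro h4
    have hcompl : (Finset.univ.filter (fun i => ¬ wt (v i) = 3)).card = 1 := by
      have := Finset.card_filter_add_card_filter_not
        (s := (Finset.univ : Finset (Fin 5))) (p := fun i => wt (v i) = 3)
      simp only [Finset.card_univ, Fintype.card_fin] at this
      rw [← hS] at this
      omega
    obtain ⟨i5, hi5⟩ := Finset.card_eq_one.mp hcompl
    have hP : ∀ i : Fin 5, i ≠ i5 → wt (v i) = 3 := by
      intro i hi
      by_contra h
      have : i ∈ Finset.univ.filter (fun i => ¬ wt (v i) = 3) := by simp [h]
      rw [hi5, Finset.mem_singleton] at this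
      exact hi this
    have h5 : wt (v i5) = 2 := by
      have : i5 ∈ Finset.univ.filter (fun i => ¬ wt (v i) = 3) := by
        rw [hi5]; exact Finset.mem_singleton_self _
      simp only [Finset.mem_filter] at this
      rcases hw i5 with h | h
      · exact h
      · exact absurd h this.2
    have main : ∃ g : (Fin 4 → ZMod 2) →ₗ[ZMod 2] ZMod 2,
        g ≠ 0 ∧ ∀ i, g (v i) = 0 := by
      fin_cases i5
      · obtain ⟨g, hg0, h1, h2, h3, h4, h5'⟩ :=
          keyA (v 1) (v 2) (v 3) (v 4) (v 0)
            (hP 1 (by decide)) (hP 2 (by decide)) (hP 3 (by decide))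
            (hP 4 (by decide)) h5 (by rw [← hsum]; try abel)
        exact ⟨g, hg0, fun i => by fin_cases i <;> assumption⟩
      · obtain ⟨g, hg0, h1, h2, h3, h4, h5'⟩ :=
          keyA (v 0) (v 2) (v 3) (v 4) (v 1)
            (hP 0 (by decide)) (hP 2 (by decide)) (hP 3 (by decide))
            (hP 4 (by decide)) h5 (by rw [← hsum]; try abel)
        exact ⟨g, hg0, fun i => by fin_cases i <;> assumption⟩
      · obtain ⟨g, hg0, h1, h2, h3, h4, h5'⟩ :=
          keyA (v 0) (v 1) (v 3) (v 4) (v 2)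
            (hP 0 (by decide)) (hP 1 (by decide)) (hP 3 (by decide))
            (hP 4 (by decide)) h5 (by rw [← hsum]; try abel)
        exact ⟨g, hg0, fun i => by fin_cases i <;> assumption⟩
      · obtain ⟨g, hg0, h1, h2, h3, h4, h5'⟩ :=
          keyA (v 0) (v 1) (v 2) (v 4) (v 3)
            (hP 0 (by decide)) (hP 1 (by decide)) (hP 2 (by decide))
            (hP 4 (by decide)) h5 (by rw [← hsum]; try abel)
        exact ⟨g, hg0, fun i => by fin_cases i <;> assumption⟩
      · obtain ⟨g, hg0, h1, h2, h3, h4, h5'⟩ :=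
          keyA (v 0) (v 1) (v 2) (v 3) (v 4)
            (hP 0 (by decide)) (hP 1 (by decide)) (hP 2 (by decide))
            (hP 3 (by decide)) h5 (by rw [← hsum]; try abel)
        exact ⟨g, hg0, fun i => by fin_cases i <;> assumption⟩
    obtain ⟨g, hg0, hg⟩ := main
    exact hg0 (hzero g hg)
  -- conclude
  show S.card = 2
  interval_cases h : S.card
  · exact absurd rfl hk0
  · exact absurd hpar (by decide)
  · rfl
  · exact absurd hpar (by decide)
  · exact absurd rfl hk4
  · exact absurd hpar (by decide)
end

section
/- Let G = (Z/2Z)^4 with basis e_1,...,e_4. Up to permutation of the tuple and up to an automorphism of G fixing the multiset {e_1,e_2,e_3,e_4, e_1+e_2+e_3+e_4}, there is exactly one 5-tuple (v_1,...,v_5) of vectors of weight 2 or 3 which spans G and has sum zero, namely (e+e_1, e+e_2, e_1+e_3, e_2+e_4, e_3+e_4) where e = e_1+e_2+e_3+e_4. -/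
private def wv : Fin 10 → (Fin 4 → ZMod 2) := ![![1,1,0,0], ![1,0,1,0], ![0,1,1,0], ![1,1,1,0], ![1,0,0,1], ![0,1,0,1], ![1,1,0,1], ![0,0,1,1], ![1,0,1,1], ![0,1,1,1]]

private def ebv : Fin 4 → (Fin 4 → ZMod 2) := fun i => Pi.single i 1
private def evv : Fin 4 → ZMod 2 := fun _ => 1
private def Sv : Set (Fin 4 → ZMod 2) := {ebv 0, ebv 1, ebv 2, ebv 3, evv}
private def SF : Finset (Fin 4 → ZMod 2) := {ebv 0, ebv 1, ebv 2, ebv 3, evv}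
private def tv : Fin 5 → (Fin 4 → ZMod 2) :=
  ![evv + ebv 0, evv + ebv 1, ebv 0 + ebv 2, ebv 1 + ebv 3, ebv 2 + ebv 3]

private lemma lemA : ∀ i, (Finset.univ.filter fun j => tv i j ≠ 0).card = 2 ∨
    (Finset.univ.filter fun j => tv i j ≠ 0).card = 3 := by decide

private lemma lemsum : tv 0 + tv 1 + tv 2 + tv 3 + tv 4 = 0 := by decide

private lemma single_mem : ∀ i : Fin 4, ∃ a b : Fin 5,
    (Pi.single i 1 : Fin 4 → ZMod 2) = tv a + tv b := by decide

private lemma lemspan : Submodule.span (ZMod 2) (Set.range tv) = ⊤ := by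
  rw [eq_top_iff, ← (Pi.basisFun (ZMod 2) (Fin 4)).span_eq, Submodule.span_le]
  rintro x ⟨i, rfl⟩
  rw [SetLike.mem_coe, Pi.basisFun_apply]
  obtain ⟨a, b, hab⟩ := single_mem i
  rw [hab]
  exact add_mem (Submodule.subset_span ⟨a, rfl⟩) (Submodule.subset_span ⟨b, rfl⟩)

private lemma mem10 : ∀ x : Fin 4 → ZMod 2,
    ((Finset.univ.filter fun j => x j ≠ 0).card = 2 ∨
      (Finset.univ.filter fun j => x j ≠ 0).card = 3) → ∃ k : Fin 10, x = wv k := by decide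

set_option maxHeartbeats 4000000 in
set_option synthInstance.maxHeartbeats 2000000 in
set_option synthInstance.maxSize 2048 in
private lemma key : ∀ k0 k1 k2 k3 k4 : Fin 10, k0 ≤ k1 → k1 ≤ k2 → k2 ≤ k3 → k3 ≤ k4 →
    wv k0 + wv k1 + wv k2 + wv k3 + wv k4 = 0 →
    (∃ u : Fin 4 → ZMod 2, u ≠ 0 ∧ (∑ j, u j * wv k0 j = 0) ∧ (∑ j, u j * wv k1 j = 0) ∧ (∑ j, u j * wv k2 j = 0) ∧ (∑ j, u j * wv k3 j = 0) ∧ (∑ j, u j * wv k4 j = 0)) ∨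
    (k0 = (0:Fin 10) ∧ k1 = (1:Fin 10) ∧ k2 = (3:Fin 10) ∧ k3 = (5:Fin 10) ∧ k4 = (6:Fin 10)) ∨
    (k0 = (0:Fin 10) ∧ k1 = (1:Fin 10) ∧ k2 = (3:Fin 10) ∧ k3 = (7:Fin 10) ∧ k4 = (8:Fin 10)) ∨
    (k0 = (0:Fin 10) ∧ k1 = (2:Fin 10) ∧ k2 = (3:Fin 10) ∧ k3 = (4:Fin 10) ∧ k4 = (6:Fin 10)) ∨
    (k0 = (0:Fin 10) ∧ k1 = (2:Fin 10) ∧ k2 = (3:Fin 10) ∧ k3 = (7:Fin 10) ∧ k4 = (9:Fin 10)) ∨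
    (k0 = (0:Fin 10) ∧ k1 = (4:Fin 10) ∧ k2 = (6:Fin 10) ∧ k3 = (7:Fin 10) ∧ k4 = (8:Fin 10)) ∨
    (k0 = (0:Fin 10) ∧ k1 = (5:Fin 10) ∧ k2 = (6:Fin 10) ∧ k3 = (7:Fin 10) ∧ k4 = (9:Fin 10)) ∨
    (k0 = (1:Fin 10) ∧ k1 = (2:Fin 10) ∧ k2 = (3:Fin 10) ∧ k3 = (4:Fin 10) ∧ k4 = (8:Fin 10)) ∨
    (k0 = (1:Fin 10) ∧ k1 = (2:Fin 10) ∧ k2 = (3:Fin 10) ∧ k3 = (5:Fin 10) ∧ k4 = (9:Fin 10)) ∨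
    (k0 = (1:Fin 10) ∧ k1 = (4:Fin 10) ∧ k2 = (5:Fin 10) ∧ k3 = (6:Fin 10) ∧ k4 = (8:Fin 10)) ∨
    (k0 = (1:Fin 10) ∧ k1 = (5:Fin 10) ∧ k2 = (7:Fin 10) ∧ k3 = (8:Fin 10) ∧ k4 = (9:Fin 10)) ∨
    (k0 = (2:Fin 10) ∧ k1 = (4:Fin 10) ∧ k2 = (5:Fin 10) ∧ k3 = (6:Fin 10) ∧ k4 = (9:Fin 10)) ∨
    (k0 = (2:Fin 10) ∧ k1 = (4:Fin 10) ∧ k2 = (7:Fin 10) ∧ k3 = (8:Fin 10) ∧ k4 = (9:Fin 10)) := by decide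

private lemma build (v : Fin 5 → (Fin 4 → ZMod 2)) (M N : Matrix (Fin 4) (Fin 4) (ZMod 2))
    (hMN : M * N = 1) (hNM : N * M = 1)
    (hS1 : ∀ x ∈ SF, M.mulVec x ∈ SF)
    (ρ : Equiv.Perm (Fin 5)) (u : Fin 5 → (Fin 4 → ZMod 2))
    (hv : ∀ j, v (ρ j) = u j)
    (c : Fin 5 → Fin 5) (hc : Function.Bijective c)
    (ht : ∀ i, M.mulVec (u (c i)) = tv i) :
    ∃ φ : (Fin 4 → ZMod 2) ≃ₗ[ZMod 2] (Fin 4 → ZMod 2),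
      φ '' Sv = Sv ∧ ∃ σ : Equiv.Perm (Fin 5), ∀ i, φ (v (σ i)) = tv i := by
  refine ⟨LinearEquiv.ofLinear M.mulVecLin N.mulVecLin
      (by rw [← Matrix.mulVecLin_mul, hMN, Matrix.mulVecLin_one])
      (by rw [← Matrix.mulVecLin_mul, hNM, Matrix.mulVecLin_one]), ?_,
    ⟨(Equiv.ofBijective c hc).trans ρ, fun i => ?_⟩⟩
  · have h1 : Sv = ↑SF := by simp [Sv, SF]
    rw [h1, ← Finset.coe_image]
    refine Finset.coe_inj.mpr (Finset.eq_of_subset_of_card_le ?_ ?_)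
    · intro y hy
      obtain ⟨x, hx, rfl⟩ := Finset.mem_image.mp hy
      simp only [LinearEquiv.ofLinear_apply, Matrix.mulVecLin_apply]
      exact hS1 x hx
    · rw [Finset.card_image_of_injective _ (LinearEquiv.injective _)]
  · show (LinearEquiv.ofLinear _ _ _ _) (v (ρ (c i))) = tv i
    rw [hv (c i)]
    simp only [LinearEquiv.ofLinear_apply, Matrix.mulVecLin_apply]
    exact ht i

/-- In `G = (ℤ/2)⁴`, up to permutation of the tuple and an automorphism of `G`
fixing the set `{e₁, e₂, e₃, e₄, e}` (where `e = e₁+e₂+e₃+e₄`), there is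
exactly one `5`-tuple of vectors of weight `2` or `3` spanning `G` with sum
zero, namely `(e+e₁, e+e₂, e₁+e₃, e₂+e₄, e₃+e₄)`. -/
theorem stmt_12 :
    let eb : Fin 4 → (Fin 4 → ZMod 2) := fun i => Pi.single i 1
    let e : Fin 4 → ZMod 2 := fun _ => 1
    let S : Set (Fin 4 → ZMod 2) := {eb 0, eb 1, eb 2, eb 3, e}
    let wt : (Fin 4 → ZMod 2) → ℕ := fun v => (Finset.univ.filter fun j => v j ≠ 0).card
    let t : Fin 5 → (Fin 4 → ZMod 2) :=
      ![e + eb 0, e + eb 1, eb 0 + eb 2, eb 1 + eb 3, eb 2 + eb 3]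
    ((∀ i, wt (t i) = 2 ∨ wt (t i) = 3) ∧
      Submodule.span (ZMod 2) (Set.range t) = ⊤ ∧
      t 0 + t 1 + t 2 + t 3 + t 4 = 0) ∧
    ∀ v : Fin 5 → (Fin 4 → ZMod 2),
      (∀ i, wt (v i) = 2 ∨ wt (v i) = 3) →
      Submodule.span (ZMod 2) (Set.range v) = ⊤ →
      v 0 + v 1 + v 2 + v 3 + v 4 = 0 →
      ∃ φ : (Fin 4 → ZMod 2) ≃ₗ[ZMod 2] (Fin 4 → ZMod 2),
        φ '' S = S ∧ ∃ σ : Equiv.Perm (Fin 5), ∀ i, φ (v (σ i)) = t i := by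
  intro eb e S wt t
  refine ⟨⟨lemA, lemspan, lemsum⟩, ?_⟩
  intro v hw hs h0
  choose g hg using fun i => mem10 (v i) (hw i)
  set ρ := Tuple.sort g with hρ
  have hmono : Monotone (g ∘ ρ) := Tuple.monotone_sort g
  have hsum : wv (g (ρ 0)) + wv (g (ρ 1)) + wv (g (ρ 2)) + wv (g (ρ 3)) + wv (g (ρ 4)) = 0 := by
    rw [← hg, ← hg, ← hg, ← hg, ← hg]
    have h5 : ∑ i, v (ρ i) = ∑ i, v i := Equiv.sum_comp ρ v
    rw [Fin.sum_univ_five, Fin.sum_univ_five] at h5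
    rw [h5]; exact h0
  rcases key (g (ρ 0)) (g (ρ 1)) (g (ρ 2)) (g (ρ 3)) (g (ρ 4))
      (hmono (by decide : (0:Fin 5) ≤ 1)) (hmono (by decide : (1:Fin 5) ≤ 2))
      (hmono (by decide : (2:Fin 5) ≤ 3)) (hmono (by decide : (3:Fin 5) ≤ 4)) hsum with
    ⟨u, hu, hd0, hd1, hd2, hd3, hd4⟩ | hcase
  · exfalso
    have hfx : ∀ x : Fin 4 → ZMod 2,
        ((∑ j, u j • LinearMap.proj j : (Fin 4 → ZMod 2) →ₗ[ZMod 2] ZMod 2)) x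
          = ∑ j, u j * x j := by
      intro x
      simp [LinearMap.sum_apply, LinearMap.smul_apply, LinearMap.proj_apply, smul_eq_mul]
    set f : (Fin 4 → ZMod 2) →ₗ[ZMod 2] ZMod 2 := ∑ j, u j • LinearMap.proj j with hf
    have hker : ∀ i, f (v (ρ i)) = 0 := by
      intro i
      rw [hg (ρ i), hfx]
      fin_cases i <;> assumption
    have hker' : ∀ i, f (v i) = 0 := by
      intro i
      have := hker (ρ.symm i)
      rwa [Equiv.apply_symm_apply] at this
    have hle : Submodule.span (ZMod 2) (Set.range v) ≤ LinearMap.ker f := by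
      rw [Submodule.span_le]
      rintro x ⟨i, rfl⟩
      exact hker' i
    rw [hs] at hle
    obtain ⟨j, hj⟩ := Function.ne_iff.mp hu
    have hfj : f (Pi.single j 1) = u j := by
      rw [hfx]
      simp [Pi.single_apply, mul_ite, mul_one, mul_zero, Finset.sum_ite_eq']
    exact hj (hfj ▸ LinearMap.mem_ker.mp (hle Submodule.mem_top))
  · rcases hcase with ⟨h0',h1',h2',h3',h4'⟩|⟨h0',h1',h2',h3',h4'⟩|⟨h0',h1',h2',h3',h4'⟩|⟨h0',h1',h2',h3',h4'⟩|⟨h0',h1',h2',h3',h4'⟩|⟨h0',h1',h2',h3',h4'⟩|⟨h0',h1',h2',h3',h4'⟩|⟨h0',h1',h2',h3',h4'⟩|⟨h0',h1',h2',h3',h4'⟩|⟨h0',h1',h2',h3',h4'⟩|⟨h0',h1',h2',h3',h4'⟩|⟨h0',h1',h2',h3',h4'⟩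
    · exact build v !![1,0,1,0; 0,0,1,0; 0,1,1,0; 0,0,1,1] !![1,1,0,0; 0,1,1,0; 0,1,0,0; 0,1,0,1] (by decide) (by decide) (by decide) ρ
        (fun j => wv (![(0:Fin 10),(1:Fin 10),(3:Fin 10),(5:Fin 10),(6:Fin 10)] j))
        (fun j => by rw [hg (ρ j)]; exact congrArg wv (by fin_cases j <;> assumption))
        ![1,4,0,2,3] (by decide) (by decide)
    · exact build v !![1,0,1,0; 0,0,1,1; 0,1,1,0; 0,0,1,0] !![1,0,0,1; 0,0,1,1; 0,0,0,1; 0,1,0,1] (by decide) (by decide) (by decide) ρ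
        (fun j => wv (![(0:Fin 10),(1:Fin 10),(3:Fin 10),(7:Fin 10),(8:Fin 10)] j))
        (fun j => by rw [hg (ρ j)]; exact congrArg wv (by fin_cases j <;> assumption))
        ![1,3,0,2,4] (by decide) (by decide)
    · exact build v !![1,0,0,1; 0,0,0,1; 0,1,0,1; 0,0,1,1] !![1,1,0,0; 0,1,1,0; 0,1,0,1; 0,1,0,0] (by decide) (by decide) (by decide) ρ
        (fun j => wv (![(0:Fin 10),(2:Fin 10),(3:Fin 10),(4:Fin 10),(6:Fin 10)] j))
        (fun j => by rw [hg (ρ j)]; exact congrArg wv (by fin_cases j <;> assumption))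
        ![3,2,0,4,1] (by decide) (by decide)
    · exact build v !![1,0,0,0; 0,0,0,1; 0,1,0,0; 0,0,1,0] !![1,0,0,0; 0,0,1,0; 0,0,0,1; 0,1,0,0] (by decide) (by decide) (by decide) ρ
        (fun j => wv (![(0:Fin 10),(2:Fin 10),(3:Fin 10),(7:Fin 10),(9:Fin 10)] j))
        (fun j => by rw [hg (ρ j)]; exact congrArg wv (by fin_cases j <;> assumption))
        ![4,2,0,3,1] (by decide) (by decide)
    · exact build v !![1,0,0,1; 0,0,1,1; 0,1,0,1; 0,0,0,1] !![1,0,0,1; 0,0,1,1; 0,1,0,1; 0,0,0,1] (by decide) (by decide) (by decide) ρ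
        (fun j => wv (![(0:Fin 10),(4:Fin 10),(6:Fin 10),(7:Fin 10),(8:Fin 10)] j))
        (fun j => by rw [hg (ρ j)]; exact congrArg wv (by fin_cases j <;> assumption))
        ![1,3,0,2,4] (by decide) (by decide)
    · exact build v !![1,0,0,0; 0,0,1,0; 0,1,0,0; 0,0,0,1] !![1,0,0,0; 0,0,1,0; 0,1,0,0; 0,0,0,1] (by decide) (by decide) (by decide) ρ
        (fun j => wv (![(0:Fin 10),(5:Fin 10),(6:Fin 10),(7:Fin 10),(9:Fin 10)] j))
        (fun j => by rw [hg (ρ j)]; exact congrArg wv (by fin_cases j <;> assumption))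
        ![4,2,0,3,1] (by decide) (by decide)
    · exact build v !![1,0,1,0; 0,1,1,0; 0,0,1,1; 0,0,1,0] !![1,0,0,1; 0,1,0,1; 0,0,0,1; 0,0,1,1] (by decide) (by decide) (by decide) ρ
        (fun j => wv (![(1:Fin 10),(2:Fin 10),(3:Fin 10),(4:Fin 10),(8:Fin 10)] j))
        (fun j => by rw [hg (ρ j)]; exact congrArg wv (by fin_cases j <;> assumption))
        ![0,1,3,4,2] (by decide) (by decide)
    · exact build v !![1,0,1,0; 0,1,1,0; 0,0,1,0; 0,0,1,1] !![1,0,1,0; 0,1,1,0; 0,0,1,0; 0,0,1,1] (by decide) (by decide) (by decide) ρ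
        (fun j => wv (![(1:Fin 10),(2:Fin 10),(3:Fin 10),(5:Fin 10),(9:Fin 10)] j))
        (fun j => by rw [hg (ρ j)]; exact congrArg wv (by fin_cases j <;> assumption))
        ![0,1,4,3,2] (by decide) (by decide)
    · exact build v !![1,0,0,1; 0,1,0,1; 0,0,1,1; 0,0,0,1] !![1,0,0,1; 0,1,0,1; 0,0,1,1; 0,0,0,1] (by decide) (by decide) (by decide) ρ
        (fun j => wv (![(1:Fin 10),(4:Fin 10),(5:Fin 10),(6:Fin 10),(8:Fin 10)] j))
        (fun j => by rw [hg (ρ j)]; exact congrArg wv (by fin_cases j <;> assumption))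
        ![1,2,0,4,3] (by decide) (by decide)
    · exact build v !![1,0,0,0; 0,1,0,0; 0,0,1,0; 0,0,0,1] !![1,0,0,0; 0,1,0,0; 0,0,1,0; 0,0,0,1] (by decide) (by decide) (by decide) ρ
        (fun j => wv (![(1:Fin 10),(5:Fin 10),(7:Fin 10),(8:Fin 10),(9:Fin 10)] j))
        (fun j => by rw [hg (ρ j)]; exact congrArg wv (by fin_cases j <;> assumption))
        ![4,3,0,1,2] (by decide) (by decide)
    · exact build v !![1,0,0,1; 0,1,0,1; 0,0,0,1; 0,0,1,1] !![1,0,1,0; 0,1,1,0; 0,0,1,1; 0,0,1,0] (by decide) (by decide) (by decide) ρ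
        (fun j => wv (![(2:Fin 10),(4:Fin 10),(5:Fin 10),(6:Fin 10),(9:Fin 10)] j))
        (fun j => by rw [hg (ρ j)]; exact congrArg wv (by fin_cases j <;> assumption))
        ![1,2,4,0,3] (by decide) (by decide)
    · exact build v !![1,0,0,0; 0,1,0,0; 0,0,0,1; 0,0,1,0] !![1,0,0,0; 0,1,0,0; 0,0,0,1; 0,0,1,0] (by decide) (by decide) (by decide) ρ
        (fun j => wv (![(2:Fin 10),(4:Fin 10),(7:Fin 10),(8:Fin 10),(9:Fin 10)] j))
        (fun j => by rw [hg (ρ j)]; exact congrArg wv (by fin_cases j <;> assumption))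
        ![4,3,1,0,2] (by decide) (by decide)
end

section
/- Let G = (Z/3Z)^2 and let a_1, a_2, a_3, a_4 be elements generating G with a_1 + a_2 + a_3 + a_4 = 0, such that the union ⟨a_1⟩∪⟨a_2⟩∪⟨a_3⟩∪⟨a_4⟩ consists of exactly 4 nonzero elements together with 0. Then up to permutation (a_1,a_2,a_3,a_4) = (a, b, -a, -b) for some basis (a,b) of G. -/
set_option maxRecDepth 10000

private def vv : Fin 5 → Fin 2 → ZMod 3 := ![![0,0], ![1,0], ![2,0], ![0,1], ![0,2]]

set_option synthInstance.maxSize 1000 in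
set_option synthInstance.maxHeartbeats 200000 in
private lemma core : ∀ d : Fin 4 → Fin 5,
    vv (d 0) + vv (d 1) + vv (d 2) + vv (d 3) = 0 →
    (∃ k, d k = 1) → (∃ k, d k = 3) →
    ∃ σ : Equiv.Perm (Fin 4), ∀ k, d (σ k) = ![1,3,2,4] k := by decide

/-- If `a₁, a₂, a₃, a₄` generate `G = (ℤ/3)²` with sum zero and the union
`⟨a₁⟩ ∪ ⟨a₂⟩ ∪ ⟨a₃⟩ ∪ ⟨a₄⟩` has exactly `4` nonzero elements, then up to
permutation the tuple is `(a, b, -a, -b)` for some basis `(a, b)` of `G`. -/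
theorem stmt_14 (a : Fin 4 → (Fin 2 → ZMod 3))
    (hgen : Submodule.span (ZMod 3) (Set.range a) = ⊤)
    (hsum : a 0 + a 1 + a 2 + a 3 = 0)
    (hcard : Set.ncard {g : Fin 2 → ZMod 3 | g ≠ 0 ∧
      ∃ i, g ∈ AddSubgroup.zmultiples (a i)} = 4) :
    ∃ x y : Fin 2 → ZMod 3,
      LinearIndependent (ZMod 3) ![x, y] ∧
      Submodule.span (ZMod 3) {x, y} = ⊤ ∧
      ∃ σ : Equiv.Perm (Fin 4), a ∘ σ = ![x, y, -x, -y] := by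
  classical
  -- there is a nonzero aᵢ
  have hne : ∃ i, a i ≠ 0 := by
    by_contra h
    push_neg at h
    have h1 : (![1,0] : Fin 2 → ZMod 3) ∈ Submodule.span (ZMod 3) (Set.range a) := by
      rw [hgen]; trivial
    have hle : Submodule.span (ZMod 3) (Set.range a) ≤ ⊥ := by
      rw [Submodule.span_le]
      rintro _ ⟨k, rfl⟩
      simp [h k]
    have := Submodule.mem_bot (ZMod 3) |>.mp (hle h1)
    exact absurd this (by decide)
  obtain ⟨i, hai⟩ := hne
  -- there is aⱼ not a multiple of aᵢ
  have hstep : ∃ j, ∀ s : ZMod 3, s • a i ≠ a j := by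
    by_contra h
    push_neg at h
    have hle : Submodule.span (ZMod 3) (Set.range a) ≤ Submodule.span (ZMod 3) {a i} := by
      rw [Submodule.span_le]
      rintro _ ⟨k, rfl⟩
      obtain ⟨s, hs⟩ := h k
      exact Submodule.mem_span_singleton.mpr ⟨s, hs⟩
    obtain ⟨g, hg⟩ :=
      (by decide : ∀ z : Fin 2 → ZMod 3, z ≠ 0 → ∃ g, ∀ s : ZMod 3, s • z ≠ g) (a i) hai
    have hgmem : g ∈ Submodule.span (ZMod 3) {a i} := hle (by rw [hgen]; trivial)
    obtain ⟨s, hs⟩ := Submodule.mem_span_singleton.mp hgmem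
    exact hg s hs
  obtain ⟨j, hj⟩ := hstep
  set x := a j with hxdef
  set y := a i with hydef
  have hind : LinearIndependent (ZMod 3) ![x, y] := by
    rw [linearIndependent_fin2]
    refine ⟨by simpa using hai, ?_⟩
    simpa using hj
  have P : ∀ s t : ZMod 3, s • x + t • y = 0 → s = 0 ∧ t = 0 := by
    intro s t hst
    have h := Fintype.linearIndependent_iff.mp hind ![s, t] (by
      simpa [Fin.sum_univ_two] using hst)
    exact ⟨by simpa using h 0, by simpa using h 1⟩
  have hx0 : x ≠ 0 := fun h => absurd (P 1 0 (by simp [h])).1 one_ne_zero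
  have hy0 : y ≠ 0 := fun h => absurd (P 0 1 (by simp [h])).2 one_ne_zero
  have hxnx : x ≠ -x := by
    intro h
    have := (P 2 0 (by
      have : x + x = 0 := by nth_rewrite 2 [h]; simp
      rw [(by decide : (2 : ZMod 3) = 1 + 1)]
      simpa [add_smul] using this)).1
    exact absurd this (by decide)
  have hyny : y ≠ -y := by
    intro h
    have := (P 0 2 (by
      have : y + y = 0 := by nth_rewrite 2 [h]; simp
      rw [(by decide : (2 : ZMod 3) = 1 + 1)]
      simpa [add_smul] using this)).2
    exact absurd this (by decide)
  have hxy : x ≠ y := by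
    intro h
    exact absurd (P 1 (-1) (by simp [h])).1 one_ne_zero
  have hxny : x ≠ -y := by
    intro h
    exact absurd (P 1 1 (by simp [h])).1 one_ne_zero
  have hnxy : -x ≠ y := by
    intro h
    exact absurd (P 1 1 (by rw [← h]; simp)).1 one_ne_zero
  have hnxny : -x ≠ -y := fun h => hxy (neg_injective h)
  -- the union set equals {x, -x, y, -y}
  set S : Set (Fin 2 → ZMod 3) := {g : Fin 2 → ZMod 3 | g ≠ 0 ∧
      ∃ i, g ∈ AddSubgroup.zmultiples (a i)} with hSdef
  have hTsub : ({x, -x, y, -y} : Set (Fin 2 → ZMod 3)) ⊆ S := by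
    intro g hg
    simp only [Set.mem_insert_iff, Set.mem_singleton_iff] at hg
    rcases hg with rfl | rfl | rfl | rfl
    · exact ⟨hx0, j, AddSubgroup.mem_zmultiples _⟩
    · exact ⟨fun h => hx0 (by simpa using congrArg Neg.neg h), j,
        (AddSubgroup.zmultiples (a j)).neg_mem (AddSubgroup.mem_zmultiples _)⟩
    · exact ⟨hy0, i, AddSubgroup.mem_zmultiples _⟩
    · exact ⟨fun h => hy0 (by simpa using congrArg Neg.neg h), i,
        (AddSubgroup.zmultiples (a i)).neg_mem (AddSubgroup.mem_zmultiples _)⟩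
  have hT4 : ({x, -x, y, -y} : Set (Fin 2 → ZMod 3)).ncard = 4 := by
    rw [Set.ncard_insert_of_notMem (by simp [hxnx, hxy, hxny]),
        Set.ncard_insert_of_notMem (by simp [hnxy, hnxny]),
        Set.ncard_insert_of_notMem (by simp [hyny]),
        Set.ncard_singleton]
  have hS : S = ({x, -x, y, -y} : Set (Fin 2 → ZMod 3)) :=
    (Set.eq_of_subset_of_ncard_le hTsub (by rw [hT4, hcard]) (Set.toFinite _)).symm
  -- each a k lies in {0, x, -x, y, -y}
  have hmem : ∀ k, ∃ t : Fin 5, a k = ![0, x, -x, y, -y] t := by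
    intro k
    by_cases h : a k = 0
    · exact ⟨0, by simpa using h⟩
    · have hk : a k ∈ S := ⟨h, k, AddSubgroup.mem_zmultiples _⟩
      rw [hS] at hk
      simp only [Set.mem_insert_iff, Set.mem_singleton_iff] at hk
      rcases hk with h' | h' | h' | h'
      · exact ⟨1, by simpa using h'⟩
      · exact ⟨2, by simpa using h'⟩
      · exact ⟨3, by simpa using h'⟩
      · exact ⟨4, by simpa using h'⟩
  choose d hd using hmem
  -- expansion of the values in terms of x, y
  have hw : ∀ t : Fin 5, ![0, x, -x, y, -y] t = vv t 0 • x + vv t 1 • y := by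
    have key : ∀ c : ZMod 3, (2 : ZMod 3) * c = -c := by decide
    intro t
    funext u
    fin_cases t <;> simp [vv, key] <;> left <;> rfl
  -- the coefficient sum is zero
  have hsum2 : vv (d 0) + vv (d 1) + vv (d 2) + vv (d 3) = 0 := by
    have e : (vv (d 0) 0 + vv (d 1) 0 + vv (d 2) 0 + vv (d 3) 0) • x
           + (vv (d 0) 1 + vv (d 1) 1 + vv (d 2) 1 + vv (d 3) 1) • y = 0 := by
      have h := hsum
      rw [hd 0, hd 1, hd 2, hd 3, hw (d 0), hw (d 1), hw (d 2), hw (d 3)] at h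
      rw [← h]
      module
    obtain ⟨e0, e1⟩ := P _ _ e
    funext t
    fin_cases t
    · simpa using e0
    · simpa using e1
  -- identify d j = 1 and d i = 3
  have huniq : ∀ t : Fin 5, ![0, x, -x, y, -y] t = x → t = 1 := by
    intro t h
    fin_cases t
    · simp only [Matrix.cons_val_zero] at h
      exact absurd h.symm hx0
    · rfl
    · simp at h
      exact absurd h.symm hxnx
    · simp at h
      exact absurd h.symm hxy
    · simp at h
      exact absurd h.symm hxny
  have huniq' : ∀ t : Fin 5, ![0, x, -x, y, -y] t = y → t = 3 := by
    intro t h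
    fin_cases t
    · simp only [Matrix.cons_val_zero] at h
      exact absurd h.symm hy0
    · simp at h
      exact absurd h hxy
    · simp at h
      exact absurd h hnxy
    · rfl
    · simp at h
      exact absurd h.symm hyny
  obtain ⟨σ, hσ⟩ := core d hsum2 ⟨j, huniq (d j) (hd j).symm⟩ ⟨i, huniq' (d i) (hd i).symm⟩
  refine ⟨x, y, hind, ?_, σ, ?_⟩
  · -- span {x, y} = ⊤
    have hsub : Submodule.span (ZMod 3) (Set.range a) ≤ Submodule.span (ZMod 3) {x, y} := by
      rw [Submodule.span_le]
      rintro _ ⟨k, rfl⟩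
      rw [hd k]
      have hx' : x ∈ Submodule.span (ZMod 3) {x, y} := Submodule.subset_span (by simp)
      have hy' : y ∈ Submodule.span (ZMod 3) {x, y} := Submodule.subset_span (by simp)
      have ht := d k
      set t := d k with htd
      clear_value t
      fin_cases t
      · simpa using Submodule.zero_mem _
      · simpa using hx'
      · simpa using Submodule.neg_mem _ hx'
      · simpa using hy'
      · simpa using Submodule.neg_mem _ hy'
    rw [eq_top_iff, ← hgen]
    exact hsub
  · funext k
    simp only [Function.comp_apply]
    rw [hd (σ k), hσ k]
    fin_cases k <;> simp
end

section
/- Let G = (Z/5Z)^2. Any 6-tuple (a_1,a_2,a_3,b_1,b_2,b_3) with a_1+a_2+a_3 = 0, b_1+b_2+b_3 = 0, each triple generating G, and (⟨a_1⟩∪⟨a_2⟩∪⟨a_3⟩) ∩ (⟨b_1⟩∪⟨b_2⟩∪⟨b_3⟩) = {0}, is equivalent under the action of GL(2, Z/5Z) × S_3 × S_3 (acting by automorphisms of G and by permuting each triple) to (e_1, e_2, -(e_1+e_2), λ(e_1+2e_2), λ(3e_1+4e_2), λ(e_1+4e_2)) for some λ ∈ {1,2,3,4}. -/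
set_option maxHeartbeats 4000000 in
set_option synthInstance.maxHeartbeats 1000000 in
set_option synthInstance.maxSize 1000 in
private lemma key15 (p q : ZMod 5 × ZMod 5)
    (hp1 : p.1 ≠ 0) (hp2 : p.2 ≠ 0) (hp12 : p.1 ≠ p.2)
    (hq1 : q.1 ≠ 0) (hq2 : q.2 ≠ 0) (hq12 : q.1 ≠ q.2)
    (hr1 : (-p-q).1 ≠ 0) (hr2 : (-p-q).2 ≠ 0) (hr12 : (-p-q).1 ≠ (-p-q).2)
    (hdet : p.1 * q.2 - p.2 * q.1 ≠ 0) :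
    ∃ l : ZMod 5, l ≠ 0 ∧ ∃ τ : Equiv.Perm (Fin 3),
      ∀ i, ![p, q, -p-q] (τ i) = ![l • ((1 : ZMod 5), (2 : ZMod 5)),
        l • ((3 : ZMod 5), (4 : ZMod 5)), l • ((1 : ZMod 5), (4 : ZMod 5))] i := by
  revert hp1 hp2 hp12 hq1 hq2 hq12 hr1 hr2 hr12 hdet
  revert p q
  decide

private lemma det_ne15 (c : Fin 3 → ZMod 5 × ZMod 5)
    (hsum : c 0 + c 1 + c 2 = 0)
    (hgen : AddSubgroup.closure (Set.range c) = ⊤) :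
    (c 0).1 * (c 1).2 - (c 0).2 * (c 1).1 ≠ 0 := by
  haveI : Fact (Nat.Prime 5) := ⟨by norm_num⟩
  have hle : AddSubgroup.closure (Set.range c) ≤
      (Submodule.span (ZMod 5) {c 0, c 1}).toAddSubgroup := by
    rw [AddSubgroup.closure_le]
    rintro _ ⟨i, rfl⟩
    fin_cases i
    · exact Submodule.subset_span (Or.inl rfl)
    · exact Submodule.subset_span (Or.inr rfl)
    · refine Submodule.mem_span_pair.2 ⟨-1, -1, ?_⟩
      show (-1 : ZMod 5) • c 0 + (-1 : ZMod 5) • c 1 = c 2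
      simp only [neg_smul, one_smul]
      linear_combination -hsum
  have h1 : ((1 : ZMod 5), (0 : ZMod 5)) ∈ Submodule.span (ZMod 5) {c 0, c 1} := by
    apply hle; rw [hgen]; trivial
  have h2 : ((0 : ZMod 5), (1 : ZMod 5)) ∈ Submodule.span (ZMod 5) {c 0, c 1} := by
    apply hle; rw [hgen]; trivial
  obtain ⟨m, n, hmn⟩ := Submodule.mem_span_pair.1 h1
  obtain ⟨p, q, hpq⟩ := Submodule.mem_span_pair.1 h2
  intro h0
  have e1 := congrArg Prod.fst hmn
  have e2 := congrArg Prod.snd hmn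
  have e3 := congrArg Prod.fst hpq
  have e4 := congrArg Prod.snd hpq
  simp only [Prod.fst_add, Prod.snd_add, Prod.smul_fst, Prod.smul_snd, smul_eq_mul] at e1 e2 e3 e4
  exact one_ne_zero (α := ZMod 5) (by
    linear_combination (-(p * (c 0).2 + q * (c 1).2)) * e1 +
      (p * (c 0).1 + q * (c 1).1) * e2 + (m * q - n * p) * h0 - e4)

private lemma exists_phi15 (v w : ZMod 5 × ZMod 5)
    (hd : v.1 * w.2 - v.2 * w.1 ≠ 0) :
    ∃ φ : (ZMod 5 × ZMod 5) ≃ₗ[ZMod 5] (ZMod 5 × ZMod 5),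
      φ v = (1, 0) ∧ φ w = (0, 1) ∧
      ∀ z z' : ZMod 5 × ZMod 5, (φ z).1 * (φ z').2 - (φ z).2 * (φ z').1
        = (v.1 * w.2 - v.2 * w.1)⁻¹ * (z.1 * z'.2 - z.2 * z'.1) := by
  haveI : Fact (Nat.Prime 5) := ⟨by norm_num⟩
  set d := v.1 * w.2 - v.2 * w.1 with hd_def
  have hu : d⁻¹ * d = 1 := inv_mul_cancel₀ hd
  refine ⟨LinearEquiv.ofLinear
    ⟨⟨fun t => (d⁻¹ * (w.2 * t.1 - w.1 * t.2), d⁻¹ * (v.1 * t.2 - v.2 * t.1)), ?_⟩, ?_⟩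
    ⟨⟨fun t => (v.1 * t.1 + w.1 * t.2, v.2 * t.1 + w.2 * t.2), ?_⟩, ?_⟩ ?_ ?_, ?_, ?_, ?_⟩
  · intro s t
    ext <;> simp only [Prod.fst_add, Prod.snd_add] <;> ring
  · intro c t
    ext <;> simp only [Prod.smul_fst, Prod.smul_snd, smul_eq_mul, RingHom.id_apply] <;> ring
  · intro s t
    ext <;> simp only [Prod.fst_add, Prod.snd_add] <;> ring
  · intro c t
    ext <;> simp only [Prod.smul_fst, Prod.smul_snd, smul_eq_mul, RingHom.id_apply] <;> ring
  · apply LinearMap.ext; intro t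
    show ((_ : ZMod 5), (_ : ZMod 5)) = t
    ext
    · show d⁻¹ * (w.2 * (v.1 * t.1 + w.1 * t.2) - w.1 * (v.2 * t.1 + w.2 * t.2)) = t.1
      linear_combination t.1 * hu
    · show d⁻¹ * (v.1 * (v.2 * t.1 + w.2 * t.2) - v.2 * (v.1 * t.1 + w.1 * t.2)) = t.2
      linear_combination t.2 * hu
  · apply LinearMap.ext; intro t
    show ((_ : ZMod 5), (_ : ZMod 5)) = t
    ext
    · show v.1 * (d⁻¹ * (w.2 * t.1 - w.1 * t.2)) + w.1 * (d⁻¹ * (v.1 * t.2 - v.2 * t.1)) = t.1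
      linear_combination t.1 * hu
    · show v.2 * (d⁻¹ * (w.2 * t.1 - w.1 * t.2)) + w.2 * (d⁻¹ * (v.1 * t.2 - v.2 * t.1)) = t.2
      linear_combination t.2 * hu
  · ext
    · show d⁻¹ * (w.2 * v.1 - w.1 * v.2) = 1
      linear_combination hu
    · show d⁻¹ * (v.1 * v.2 - v.2 * v.1) = 0
      ring
  · ext
    · show d⁻¹ * (w.2 * w.1 - w.1 * w.2) = 0
      ring
    · show d⁻¹ * (v.1 * w.2 - v.2 * w.1) = 1
      linear_combination hu
  · intro z z'
    show d⁻¹ * (w.2 * z.1 - w.1 * z.2) * (d⁻¹ * (v.1 * z'.2 - v.2 * z'.1)) -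
      d⁻¹ * (v.1 * z.2 - v.2 * z.1) * (d⁻¹ * (w.2 * z'.1 - w.1 * z'.2)) =
      d⁻¹ * (z.1 * z'.2 - z.2 * z'.1)
    linear_combination (d⁻¹ * (z.1 * z'.2 - z.2 * z'.1)) * hu

private lemma smul_mem_zmultiples15 (c : ZMod 5) (x : ZMod 5 × ZMod 5) :
    c • x ∈ AddSubgroup.zmultiples x := by
  refine AddSubgroup.mem_zmultiples_iff.2 ⟨(c.val : ℤ), ?_⟩
  rw [natCast_zsmul, ← Nat.cast_smul_eq_nsmul (ZMod 5), ZMod.natCast_val, ZMod.cast_id]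

/-- A pair of spherical systems of generators of `G = (ℤ/5)²` whose cyclic
subgroups meet only in `0` is equivalent, under `GL(2, ℤ/5) × S₃ × S₃`, to
`((e₁, e₂, -(e₁+e₂)), (λ(e₁+2e₂), λ(3e₁+4e₂), λ(e₁+4e₂)))` for some
nonzero `λ`. -/
theorem stmt_15 (a b : Fin 3 → ZMod 5 × ZMod 5)
    (hagen : AddSubgroup.closure (Set.range a) = ⊤)
    (hbgen : AddSubgroup.closure (Set.range b) = ⊤)
    (hasum : a 0 + a 1 + a 2 = 0) (hbsum : b 0 + b 1 + b 2 = 0)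
    (hdisj : ∀ g : ZMod 5 × ZMod 5,
      (∃ i, g ∈ AddSubgroup.zmultiples (a i)) →
      (∃ j, g ∈ AddSubgroup.zmultiples (b j)) → g = 0) :
    ∃ l : ZMod 5, l ≠ 0 ∧
      ∃ φ : (ZMod 5 × ZMod 5) ≃ₗ[ZMod 5] (ZMod 5 × ZMod 5),
        ∃ σ τ : Equiv.Perm (Fin 3),
          (∀ i, φ (a (σ i)) = ![((1 : ZMod 5), (0 : ZMod 5)), (0, 1), (-1, -1)] i) ∧
          (∀ i, φ (b (τ i)) = ![l • ((1 : ZMod 5), (2 : ZMod 5)),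
            l • ((3 : ZMod 5), (4 : ZMod 5)), l • ((1 : ZMod 5), (4 : ZMod 5))] i) := by
  haveI : Fact (Nat.Prime 5) := ⟨by norm_num⟩
  have hda := det_ne15 a hasum hagen
  have hdb := det_ne15 b hbsum hbgen
  obtain ⟨φ, hφ0, hφ1, hφdet⟩ := exists_phi15 (a 0) (a 1) hda
  have ha2 : a 2 = -a 0 - a 1 := by linear_combination hasum
  have hb2 : b 2 = -b 0 - b 1 := by linear_combination hbsum
  have hφ2 : φ (a 2) = (-1, -1) := by
    rw [ha2, map_sub, map_neg, hφ0, hφ1]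
    exact Prod.ext (by norm_num) (by norm_num)
  -- all b j are nonzero
  have hbne : ∀ j : Fin 3, b j ≠ 0 := by
    intro j hj
    fin_cases j
    · apply hdb; rw [show b 0 = 0 from hj]; simp
    · apply hdb; rw [show b 1 = 0 from hj]; simp
    · have h10 : b 1 = -b 0 := by
        have := hb2; rw [show b 2 = 0 from hj] at this; linear_combination this
      apply hdb; rw [h10]; simp only [Prod.fst_neg, Prod.snd_neg]; ring
  -- if φ (b j) is a multiple of φ (a i), contradiction
  have main : ∀ (j i : Fin 3) (c : ZMod 5), φ (b j) = c • φ (a i) → False := by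
    intro j i c h
    have hb : b j = c • a i := φ.injective (by rw [map_smul]; exact h)
    have := hdisj (b j) ⟨i, hb ▸ smul_mem_zmultiples15 c (a i)⟩
      ⟨j, AddSubgroup.mem_zmultiples _⟩
    exact hbne j this
  have hcond : ∀ j : Fin 3, (φ (b j)).1 ≠ 0 ∧ (φ (b j)).2 ≠ 0 ∧ (φ (b j)).1 ≠ (φ (b j)).2 := by
    intro j
    refine ⟨fun h => main j 1 (φ (b j)).2 ?_, fun h => main j 0 (φ (b j)).1 ?_,
      fun h => main j 2 (-(φ (b j)).1) ?_⟩
    · rw [hφ1]; exact Prod.ext (by simp [h]) (by simp)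
    · rw [hφ0]; exact Prod.ext (by simp) (by simp [h])
    · rw [hφ2]; exact Prod.ext (by simp) (by simp [← h])
  obtain ⟨hp1, hp2, hp12⟩ := hcond 0
  obtain ⟨hq1, hq2, hq12⟩ := hcond 1
  obtain ⟨hr1', hr2', hr12'⟩ := hcond 2
  have hφb2 : φ (b 2) = -φ (b 0) - φ (b 1) := by rw [hb2, map_sub, map_neg]
  rw [hφb2] at hr1' hr2' hr12'
  have hdet' : (φ (b 0)).1 * (φ (b 1)).2 - (φ (b 0)).2 * (φ (b 1)).1 ≠ 0 := by
    rw [hφdet]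
    exact mul_ne_zero (inv_ne_zero hda) hdb
  obtain ⟨l, hl, τ, hτ⟩ := key15 (φ (b 0)) (φ (b 1)) hp1 hp2 hp12 hq1 hq2 hq12
    hr1' hr2' hr12' hdet'
  refine ⟨l, hl, φ, Equiv.refl _, τ, ?_, ?_⟩
  · intro i
    fin_cases i
    · exact hφ0
    · exact hφ1
    · exact hφ2
  · intro i
    have hlist : ∀ k : Fin 3, φ (b k) = ![φ (b 0), φ (b 1), -φ (b 0) - φ (b 1)] k := by
      intro k
      fin_cases k
      · rfl
      · rfl
      · exact hφb2
    rw [hlist (τ i)]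
    exact hτ i
end

section
/- The set of 6-tuples (a_1,a_2,a_3,b_1,b_2,b_3) in G = (Z/5Z)^2 with a_1+a_2+a_3 = b_1+b_2+b_3 = 0, each triple generating G, and (⟨a_1⟩∪⟨a_2⟩∪⟨a_3⟩) ∩ (⟨b_1⟩∪⟨b_2⟩∪⟨b_3⟩) = {0}, decomposes into exactly two orbits under the action of GL(2,Z/5Z) × S_3 × S_3. -/
/-- A pair of spherical systems of generators of `G = (ℤ/5)²` whose cyclic
subgroups meet only in `0`. -/
def BeauvilleDatum (p : (Fin 3 → ZMod 5 × ZMod 5) × (Fin 3 → ZMod 5 × ZMod 5)) : Prop :=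
  AddSubgroup.closure (Set.range p.1) = ⊤ ∧
  AddSubgroup.closure (Set.range p.2) = ⊤ ∧
  p.1 0 + p.1 1 + p.1 2 = 0 ∧ p.2 0 + p.2 1 + p.2 2 = 0 ∧
  ∀ g : ZMod 5 × ZMod 5,
    (∃ i, g ∈ AddSubgroup.zmultiples (p.1 i)) →
    (∃ j, g ∈ AddSubgroup.zmultiples (p.2 j)) → g = 0

/-- Equivalence of such pairs under `GL(2, ℤ/5) × S₃ × S₃`: a linear
automorphism of `G` applied to all entries, together with separate
permutations of the two triples. -/
def BeauvilleEquiv (p q : (Fin 3 → ZMod 5 × ZMod 5) × (Fin 3 → ZMod 5 × ZMod 5)) : Prop :=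
  ∃ φ : (ZMod 5 × ZMod 5) ≃ₗ[ZMod 5] (ZMod 5 × ZMod 5),
    ∃ σ τ : Equiv.Perm (Fin 3),
      (∀ i, φ (p.1 (σ i)) = q.1 i) ∧ (∀ i, φ (p.2 (τ i)) = q.2 i)

/-! ### Auxiliary machinery -/

abbrev G5 := ZMod 5 × ZMod 5

instance : Fact (Nat.Prime 5) := ⟨by norm_num⟩

def app (a b c d : ZMod 5) (v : G5) : G5 := (a*v.1+b*v.2, c*v.1+d*v.2)

def mdet (u v : G5) : ZMod 5 := u.1*v.2 - u.2*v.1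

lemma smul_pair (c : ZMod 5) (x : G5) : c • x = (c * x.1, c * x.2) := rfl

lemma zsmul_cast (c : ZMod 5) (x : G5) : c • x = (c.val : ℤ) • x := by
  rw [Int.cast_smul_eq_zsmul (ZMod 5) (c.val : ℤ) x |>.symm]
  norm_num [ZMod.natCast_val, ZMod.cast_id]

lemma mem_zmul (a g : G5) : g ∈ AddSubgroup.zmultiples a ↔ ∃ c : ZMod 5, g = c • a := by
  constructor
  · intro hg
    obtain ⟨k, rfl⟩ := AddSubgroup.mem_zmultiples_iff.mp hg
    exact ⟨(k : ZMod 5), (Int.cast_smul_eq_zsmul (ZMod 5) k a).symm⟩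
  · rintro ⟨c, rfl⟩
    rw [zsmul_cast]
    exact AddSubgroup.zsmul_mem _ (AddSubgroup.mem_zmultiples a) _

lemma closure_top (f : Fin 3 → G5) (h : mdet (f 0) (f 1) ≠ 0) :
    AddSubgroup.closure (Set.range f) = ⊤ := by
  rw [eq_top_iff]
  rintro g -
  have h0 : f 0 ∈ AddSubgroup.closure (Set.range f) := AddSubgroup.subset_closure ⟨0, rfl⟩
  have h1 : f 1 ∈ AddSubgroup.closure (Set.range f) := AddSubgroup.subset_closure ⟨1, rfl⟩
  have key : g = ((mdet (f 0) (f 1))⁻¹ * (g.1 * (f 1).2 - g.2 * (f 1).1)) • f 0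
      + ((mdet (f 0) (f 1))⁻¹ * (g.2 * (f 0).1 - g.1 * (f 0).2)) • f 1 := by
    simp only [smul_pair, Prod.ext_iff, Prod.fst_add, Prod.snd_add, mdet] at *
    constructor <;> field_simp <;> ring
  rw [key, zsmul_cast _ (f 0), zsmul_cast _ (f 1)]
  exact AddSubgroup.add_mem _ (AddSubgroup.zsmul_mem _ h0 _) (AddSubgroup.zsmul_mem _ h1 _)

/-- the annihilator subgroup of a functional -/
def ker2 (α β : ZMod 5) : AddSubgroup G5 where
  carrier := {g | α * g.1 + β * g.2 = 0}
  zero_mem' := by simp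
  add_mem' := by
    intro a b ha hb
    simp only [Set.mem_setOf_eq, Prod.fst_add, Prod.snd_add] at *
    linear_combination ha + hb
  neg_mem' := by
    intro a ha
    simp only [Set.mem_setOf_eq, Prod.fst_neg, Prod.snd_neg] at *
    linear_combination -ha

lemma det_ne (f : Fin 3 → G5) (htop : AddSubgroup.closure (Set.range f) = ⊤)
    (hsum : f 0 + f 1 + f 2 = 0) : mdet (f 0) (f 1) ≠ 0 := by
  intro hd
  obtain ⟨α, β, hne, ha, hb⟩ : ∃ α β : ZMod 5, ¬(α = 0 ∧ β = 0) ∧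
      α * (f 0).1 + β * (f 0).2 = 0 ∧ α * (f 1).1 + β * (f 1).2 = 0 := by
    by_cases h0 : f 0 = 0
    · by_cases h1 : f 1 = 0
      · exact ⟨1, 0, by simp, by simp [h0], by simp [h1]⟩
      · refine ⟨(f 1).2, -(f 1).1, ?_, by simp [h0], by ring⟩
        rintro ⟨p, q⟩
        exact h1 (Prod.ext (by simpa using q) p)
    · refine ⟨(f 0).2, -(f 0).1, ?_, by ring, ?_⟩
      · rintro ⟨p, q⟩
        exact h0 (Prod.ext (by simpa using q) p)
      · simp only [mdet] at hd; linear_combination -hd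
  have hsub : Set.range f ⊆ (ker2 α β : Set G5) := by
    rintro - ⟨i, rfl⟩
    have h2 : α * (f 2).1 + β * (f 2).2 = 0 := by
      have e1 : (f 0).1 + (f 1).1 + (f 2).1 = 0 := by
        have := congrArg Prod.fst hsum; simpa using this
      have e2 : (f 0).2 + (f 1).2 + (f 2).2 = 0 := by
        have := congrArg Prod.snd hsum; simpa using this
      linear_combination α * e1 + β * e2 - ha - hb
    fin_cases i <;> assumption
  have hle : (⊤ : AddSubgroup G5) ≤ ker2 α β := by
    rw [← htop]; exact (AddSubgroup.closure_le _).mpr hsub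
  rcases (not_and_or.mp hne) with h | h
  · have := hle (AddSubgroup.mem_top ((1 : ZMod 5), (0 : ZMod 5)))
    simp only [ker2, AddSubgroup.mem_mk, Set.mem_setOf_eq] at this
    simp at this; exact h this
  · have := hle (AddSubgroup.mem_top ((0 : ZMod 5), (1 : ZMod 5)))
    simp only [ker2, AddSubgroup.mem_mk, Set.mem_setOf_eq] at this
    simp at this; exact h this

lemma collinear (w z : G5) (hw : w ≠ 0) (h : mdet w z = 0) : ∃ c : ZMod 5, z = c • w := by
  simp only [mdet] at h
  by_cases h1 : w.1 = 0
  · have h2 : w.2 ≠ 0 := fun h2 => hw (Prod.ext h1 h2)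
    refine ⟨w.2⁻¹ * z.2, ?_⟩
    have : w.1 * z.2 = w.2 * z.1 := by linear_combination h
    refine Prod.ext ?_ ?_ <;> show (_ : ZMod 5) = (_ : ZMod 5) * (_ : ZMod 5)
    · field_simp; first | ring1 | (linear_combination this) | (linear_combination -this) | (linear_combination 2*this) | (linear_combination -2*this)
    · field_simp
  · refine ⟨w.1⁻¹ * z.1, ?_⟩
    have : w.1 * z.2 = w.2 * z.1 := by linear_combination h
    refine Prod.ext ?_ ?_ <;> show (_ : ZMod 5) = (_ : ZMod 5) * (_ : ZMod 5)
    · field_simp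
    · field_simp; first | ring1 | (linear_combination this) | (linear_combination -this) | (linear_combination 2*this) | (linear_combination -2*this)

def lmap (a b c d : ZMod 5) : G5 →ₗ[ZMod 5] G5 where
  toFun := app a b c d
  map_add' := by intro x y; simp [app, Prod.ext_iff]; constructor <;> ring
  map_smul' := by intro r x; simp [app, Prod.ext_iff, smul_eq_mul]; constructor <;> ring

noncomputable def mkEquiv (a b c d : ZMod 5) (h : a*d - b*c ≠ 0) : G5 ≃ₗ[ZMod 5] G5 :=
  LinearEquiv.ofLinear (lmap a b c d)
    (lmap ((a*d-b*c)⁻¹*d) (-((a*d-b*c)⁻¹*b)) (-((a*d-b*c)⁻¹*c)) ((a*d-b*c)⁻¹*a))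
    (by have h' : -(c * b) + a * d ≠ 0 := by intro e; apply h; linear_combination e
        ext v <;> simp [lmap, app] <;> (try field_simp) <;>
          first | ring1 | (ring_nf; rw [← neg_mul, ← add_mul]; exact mul_inv_cancel₀ h'))
    (by ext v <;> simp [lmap, app] <;> (try field_simp) <;> ring)

@[simp] lemma mkEquiv_apply (a b c d : ZMod 5) (h) (v : G5) :
    mkEquiv a b c d h v = app a b c d v := rfl

lemma phi_rep (φ : G5 ≃ₗ[ZMod 5] G5) (v : G5) :
    φ v = app ((φ (1,0)).1) ((φ (0,1)).1) ((φ (1,0)).2) ((φ (0,1)).2) v := by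
  have hv : v = v.1 • ((1 : ZMod 5), (0 : ZMod 5)) + v.2 • ((0 : ZMod 5), (1 : ZMod 5)) := by
    refine Prod.ext ?_ ?_ <;> simp [smul_pair]
  conv_lhs => rw [hv]
  rw [map_add, map_smul, map_smul]
  refine Prod.ext ?_ ?_ <;> simp [smul_pair, app] <;> ring

lemma phi_det (φ : G5 ≃ₗ[ZMod 5] G5) :
    (φ (1,0)).1 * (φ (0,1)).2 - (φ (1,0)).2 * (φ (0,1)).1 ≠ 0 := by
  intro h
  set a := (φ (1,0)).1 with ha
  set b := (φ (0,1)).1 with hb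
  set c := (φ (1,0)).2 with hc
  set d := (φ (0,1)).2 with hd
  have key : ∀ w : G5, app a b c d w = 0 → w = 0 := by
    intro w hw
    have : φ w = 0 := by rw [phi_rep φ w, ← ha, ← hb, ← hc, ← hd, hw]
    exact (LinearEquiv.map_eq_zero_iff φ).mp this
  have h1 : (b, -a) = (0 : G5) := by
    apply key; refine Prod.ext ?_ ?_ <;> simp [app] <;> first | ring1 | (linear_combination h) | (linear_combination -h)
  have h2 : (d, -c) = (0 : G5) := by
    apply key; refine Prod.ext ?_ ?_ <;> simp [app] <;> first | ring1 | (linear_combination h) | (linear_combination -h)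
  have hb0 : b = 0 := congrArg Prod.fst h1
  have ha0 : a = 0 := by have := congrArg Prod.snd h1; simpa using this
  have hd0 : d = 0 := congrArg Prod.fst h2
  have hc0 : c = 0 := by have := congrArg Prod.snd h2; simpa using this
  have : ((1 : ZMod 5), (0 : ZMod 5)) = (0 : G5) := by
    apply key; refine Prod.ext ?_ ?_ <;> simp [app, ha0, hc0]
  exact absurd (congrArg Prod.fst this) (by decide)

/-! ### The decidable surrogate for the equivalence -/

def zinv (a : ZMod 5) : ZMod 5 := a*a*a

lemma zinv_eq (a : ZMod 5) : zinv a = a⁻¹ := by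
  by_cases h : a = 0
  · simp [zinv, h]
  · have h4 : a ^ 4 = 1 := by
      have := ZMod.pow_card_sub_one_eq_one h
      norm_num at this
      exact this
    show a*a*a = a⁻¹
    exact eq_inv_of_mul_eq_one_left (by linear_combination h4)

abbrev M4 := ZMod 5 × ZMod 5 × ZMod 5 × ZMod 5

def matOf (u v p1 p2 : G5) : M4 :=
  (zinv (mdet u v) * (p1.1*v.2 - p2.1*u.2), zinv (mdet u v) * (p2.1*u.1 - p1.1*v.1),
   zinv (mdet u v) * (p1.2*v.2 - p2.2*u.2), zinv (mdet u v) * (p2.2*u.1 - p1.2*v.1))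

def appM (m : M4) (v : G5) : G5 := app m.1 m.2.1 m.2.2.1 m.2.2.2 v

def det4 (m : M4) : ZMod 5 := m.1 * m.2.2.2 - m.2.1 * m.2.2.1

def Equiv'' (x y : (Fin 3 → G5) × (Fin 3 → G5)) : Prop :=
  ∃ s t : Fin 3 → Fin 3, Function.Bijective s ∧ Function.Bijective t ∧
    det4 (matOf (x.1 (s 0)) (x.1 (s 1)) (y.1 0) (y.1 1)) ≠ 0 ∧
    (∀ i, appM (matOf (x.1 (s 0)) (x.1 (s 1)) (y.1 0) (y.1 1)) (x.1 (s i)) = y.1 i) ∧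
    (∀ i, appM (matOf (x.1 (s 0)) (x.1 (s 1)) (y.1 0) (y.1 1)) (x.2 (t i)) = y.2 i)

instance instDecEquiv (x y : (Fin 3 → G5) × (Fin 3 → G5)) : Decidable (Equiv'' x y) := by
  unfold Equiv''; infer_instance

def Ef : Fin 3 → G5 := ![(1,0),(0,1),(4,4)]
def P : (Fin 3 → G5) × (Fin 3 → G5) := (Ef, ![(1,2),(3,4),(1,4)])
def Q : (Fin 3 → G5) × (Fin 3 → G5) := (Ef, ![(2,4),(1,3),(2,3)])

lemma notPQ : ¬ Equiv'' P Q := by decide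

lemma PdetBij : ∀ s : Fin 3 → Fin 3, Function.Bijective s →
    mdet (P.1 (s 0)) (P.1 (s 1)) ≠ 0 := by decide

set_option maxRecDepth 20000 in
set_option synthInstance.maxHeartbeats 1000000 in
set_option synthInstance.maxSize 2000 in
set_option maxHeartbeats 4000000 in
lemma key_s17 : ∀ b0 b1 b2 : G5, b0 + b1 + b2 = 0 → mdet b0 b1 ≠ 0 →
    (∀ i : Fin 3, mdet (Ef i) b0 ≠ 0 ∧ mdet (Ef i) b1 ≠ 0 ∧ mdet (Ef i) b2 ≠ 0) →
    Equiv'' (Ef, ![b0, b1, b2]) P ∨ Equiv'' (Ef, ![b0, b1, b2]) Q := by decide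

/-! ### Bridges between `Equiv''` and `BeauvilleEquiv` -/

lemma toBeauville (x y : (Fin 3 → G5) × (Fin 3 → G5)) (h : Equiv'' x y) :
    BeauvilleEquiv x y := by
  obtain ⟨s, t, hs, ht, hdet, h1, h2⟩ := h
  refine ⟨mkEquiv _ _ _ _ hdet, Equiv.ofBijective s hs, Equiv.ofBijective t ht, ?_, ?_⟩ <;>
    intro i <;> simp only [Equiv.ofBijective_apply, mkEquiv_apply]
  · exact h1 i
  · exact h2 i

lemma equiv_trans {x y z : (Fin 3 → G5) × (Fin 3 → G5)}
    (h1 : BeauvilleEquiv x y) (h2 : BeauvilleEquiv y z) : BeauvilleEquiv x z := by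
  obtain ⟨φ1, σ1, τ1, h11, h12⟩ := h1
  obtain ⟨φ2, σ2, τ2, h21, h22⟩ := h2
  refine ⟨φ1.trans φ2, σ2.trans σ1, τ2.trans τ1, ?_, ?_⟩ <;> intro i <;>
    simp only [LinearEquiv.trans_apply, Equiv.trans_apply]
  · rw [h11 (σ2 i), h21 i]
  · rw [h12 (τ2 i), h22 i]

lemma fromBeauville (h : BeauvilleEquiv P Q) : Equiv'' P Q := by
  obtain ⟨φ, σ, τ, h1, h2⟩ := h
  have hΔ : mdet (P.1 (σ 0)) (P.1 (σ 1)) ≠ 0 := PdetBij σ σ.bijective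
  set u := P.1 (σ 0) with hu
  set v := P.1 (σ 1) with hv
  set A := (φ (1,0)).1 with hA
  set B := (φ (0,1)).1 with hB
  set C := (φ (1,0)).2 with hC
  set D := (φ (0,1)).2 with hD
  have hrep : ∀ w, φ w = app A B C D w := fun w => phi_rep φ w
  have e1 : app A B C D u = Q.1 0 := by rw [← hrep]; exact h1 0
  have e2 : app A B C D v = Q.1 1 := by rw [← hrep]; exact h1 1
  have e11 : A * u.1 + B * u.2 = (Q.1 0).1 := congrArg Prod.fst e1
  have e12 : C * u.1 + D * u.2 = (Q.1 0).2 := congrArg Prod.snd e1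
  have e21 : A * v.1 + B * v.2 = (Q.1 1).1 := congrArg Prod.fst e2
  have e22 : C * v.1 + D * v.2 = (Q.1 1).2 := congrArg Prod.snd e2
  have hmd : mdet u v = u.1*v.2 - u.2*v.1 := rfl
  have hmat : matOf u v (Q.1 0) (Q.1 1) = (A, B, C, D) := by
    unfold matOf
    rw [zinv_eq]
    refine Prod.ext ?_ (Prod.ext ?_ (Prod.ext ?_ ?_)) <;> simp only [] <;>
      rw [inv_mul_eq_iff_eq_mul₀ hΔ] <;> rw [hmd] <;>
      first
        | (linear_combination v.2 * e11 - u.2 * e21)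
        | (linear_combination u.2 * e21 - v.2 * e11)
        | (linear_combination u.1 * e21 - v.1 * e11)
        | (linear_combination v.1 * e11 - u.1 * e21)
        | (linear_combination v.2 * e12 - u.2 * e22)
        | (linear_combination u.2 * e22 - v.2 * e12)
        | (linear_combination u.1 * e22 - v.1 * e12)
        | (linear_combination v.1 * e12 - u.1 * e22)
  refine ⟨⇑σ, ⇑τ, σ.bijective, τ.bijective, ?_, ?_, ?_⟩
  · rw [← hu, ← hv, hmat]
    show A * D - B * C ≠ 0
    intro hh
    exact phi_det φ (by rw [← hA, ← hB, ← hC, ← hD]; linear_combination hh)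
  · intro i
    rw [← hu, ← hv, hmat]
    show app A B C D (P.1 (σ i)) = Q.1 i
    rw [← hrep]; exact h1 i
  · intro i
    rw [← hu, ← hv, hmat]
    show app A B C D (P.2 (τ i)) = Q.2 i
    rw [← hrep]; exact h2 i

/-! ### The data `P` and `Q` -/

lemma interPQ : ∀ (p : (Fin 3 → G5) × (Fin 3 → G5)), p = P ∨ p = Q →
    ∀ (i j : Fin 3) (c d : ZMod 5), c • p.1 i = d • p.2 j → d • p.2 j = 0 := by
  rintro p (rfl | rfl) <;> decide

lemma datumPQ (p : (Fin 3 → G5) × (Fin 3 → G5)) (hp : p = P ∨ p = Q) : BeauvilleDatum p := by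
  have hd1 : mdet (p.1 0) (p.1 1) ≠ 0 := by rcases hp with rfl | rfl <;> decide
  have hd2 : mdet (p.2 0) (p.2 1) ≠ 0 := by rcases hp with rfl | rfl <;> decide
  refine ⟨closure_top _ hd1, closure_top _ hd2, ?_, ?_, ?_⟩
  · rcases hp with rfl | rfl <;> decide
  · rcases hp with rfl | rfl <;> decide
  · rintro g ⟨i, hgi⟩ ⟨j, hgj⟩
    obtain ⟨c, rfl⟩ := (mem_zmul _ _).mp hgi
    obtain ⟨d, hd⟩ := (mem_zmul _ _).mp hgj
    rw [hd]
    exact interPQ p hp i j c d hd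

/-! ### Main theorem -/

/-- The Beauville data for `G = (ℤ/5)²` form exactly two orbits under the
action of `GL(2, ℤ/5) × S₃ × S₃`. -/
theorem stmt_17 :
    ∃ p q : (Fin 3 → ZMod 5 × ZMod 5) × (Fin 3 → ZMod 5 × ZMod 5),
      BeauvilleDatum p ∧ BeauvilleDatum q ∧ ¬ BeauvilleEquiv p q ∧
      ∀ x, BeauvilleDatum x → BeauvilleEquiv x p ∨ BeauvilleEquiv x q := by
  refine ⟨P, Q, datumPQ P (Or.inl rfl), datumPQ Q (Or.inr rfl),
    fun h => notPQ (fromBeauville h), ?_⟩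
  intro x hx
  obtain ⟨hc1, hc2, hs1, hs2, hint⟩ := hx
  have hd1 : mdet (x.1 0) (x.1 1) ≠ 0 := det_ne _ hc1 hs1
  have hd2 : mdet (x.2 0) (x.2 1) ≠ 0 := det_ne _ hc2 hs2
  set u := x.1 0 with hu
  set v := x.1 1 with hv
  set Δ := mdet u v with hΔdef
  have hdet : (Δ⁻¹ * v.2) * (Δ⁻¹ * u.1) - (-(Δ⁻¹ * v.1)) * (-(Δ⁻¹ * u.2)) ≠ 0 := by
    have e : (Δ⁻¹ * v.2) * (Δ⁻¹ * u.1) - (-(Δ⁻¹ * v.1)) * (-(Δ⁻¹ * u.2)) = Δ⁻¹ * (Δ⁻¹ * Δ) := by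
      rw [hΔdef]; unfold mdet; ring
    rw [e, inv_mul_cancel₀ hd1, mul_one]
    exact inv_ne_zero hd1
  set ψ := mkEquiv (Δ⁻¹ * v.2) (-(Δ⁻¹ * v.1)) (-(Δ⁻¹ * u.2)) (Δ⁻¹ * u.1) hdet with hψ
  have happ : ∀ w : G5, ψ w = ((Δ⁻¹ * v.2) * w.1 + (-(Δ⁻¹ * v.1)) * w.2,
      (-(Δ⁻¹ * u.2)) * w.1 + (Δ⁻¹ * u.1) * w.2) := fun w => rfl
  have hψu : ψ u = ((1 : ZMod 5), (0 : ZMod 5)) := by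
    rw [happ]
    refine Prod.ext ?_ ?_ <;> simp only []
    · have e : (Δ⁻¹ * v.2) * u.1 + (-(Δ⁻¹ * v.1)) * u.2 = Δ⁻¹ * Δ := by
        rw [hΔdef]; unfold mdet; ring
      rw [e, inv_mul_cancel₀ hd1]
    · ring
  have hψv : ψ v = ((0 : ZMod 5), (1 : ZMod 5)) := by
    rw [happ]
    refine Prod.ext ?_ ?_ <;> simp only []
    · ring
    · have e : (-(Δ⁻¹ * u.2)) * v.1 + (Δ⁻¹ * u.1) * v.2 = Δ⁻¹ * Δ := by
        rw [hΔdef]; unfold mdet; ring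
      rw [e, inv_mul_cancel₀ hd1]
  have hx2 : x.1 2 = -(u + v) := eq_neg_of_add_eq_zero_right hs1
  have hψ2 : ψ (x.1 2) = ((4 : ZMod 5), (4 : ZMod 5)) := by
    rw [hx2, map_neg, map_add, hψu, hψv]; decide
  have hψE : ∀ i, ψ (x.1 i) = Ef i := by
    intro i; fin_cases i
    · exact hψu
    · exact hψv
    · exact hψ2
  have mdet_psi : ∀ w1 w2 : G5, mdet (ψ w1) (ψ w2) =
      ((Δ⁻¹ * v.2) * (Δ⁻¹ * u.1) - (-(Δ⁻¹ * v.1)) * (-(Δ⁻¹ * u.2))) * mdet w1 w2 := by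
    intro w1 w2
    rw [happ, happ]; unfold mdet; simp only []; ring
  have ky1 : ψ (x.2 0) + ψ (x.2 1) + ψ (x.2 2) = 0 := by
    rw [← map_add, ← map_add, hs2, map_zero]
  have ky2 : mdet (ψ (x.2 0)) (ψ (x.2 1)) ≠ 0 := by
    rw [mdet_psi]; exact mul_ne_zero hdet hd2
  have n0 : ψ (x.2 0) ≠ 0 := fun h0 => ky2 (by unfold mdet; rw [h0]; simp)
  have n1 : ψ (x.2 1) ≠ 0 := fun h0 => ky2 (by unfold mdet; rw [h0]; simp)
  have n2 : ψ (x.2 2) ≠ 0 := by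
    intro h0
    have h01 : ψ (x.2 0) + ψ (x.2 1) = 0 := by
      have := ky1; rw [h0, add_zero] at this; exact this
    have h21 : ψ (x.2 1) = -(ψ (x.2 0)) := eq_neg_of_add_eq_zero_right h01
    apply ky2
    rw [h21]; unfold mdet
    simp only [Prod.fst_neg, Prod.snd_neg]; ring
  have hy2ne : ∀ j, ψ (x.2 j) ≠ 0 := by
    intro j; fin_cases j
    · exact n0
    · exact n1
    · exact n2
  have H : ∀ (i j : Fin 3), mdet (Ef i) (ψ (x.2 j)) ≠ 0 := by
    intro i j hdij
    have hEfne : Ef i ≠ 0 := by fin_cases i <;> decide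
    obtain ⟨c, hc⟩ := collinear _ _ hEfne hdij
    rw [← hψE i] at hc
    have hxx : x.2 j = c • x.1 i := by
      apply ψ.injective
      rw [map_smul]; exact hc
    have hmem1 : x.2 j ∈ AddSubgroup.zmultiples (x.1 i) := (mem_zmul _ _).mpr ⟨c, hxx⟩
    have hmem2 : x.2 j ∈ AddSubgroup.zmultiples (x.2 j) := AddSubgroup.mem_zmultiples _
    have h0 : x.2 j = 0 := hint _ ⟨i, hmem1⟩ ⟨j, hmem2⟩
    exact hy2ne j (by rw [h0, map_zero])
  have hkey := key_s17 (ψ (x.2 0)) (ψ (x.2 1)) (ψ (x.2 2)) ky1 ky2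
    (fun i => ⟨H i 0, H i 1, H i 2⟩)
  have hfun : ![ψ (x.2 0), ψ (x.2 1), ψ (x.2 2)] = fun j => ψ (x.2 j) := by
    funext j; fin_cases j <;> rfl
  rw [hfun] at hkey
  have hxy : BeauvilleEquiv x (Ef, fun j => ψ (x.2 j)) :=
    ⟨ψ, Equiv.refl _, Equiv.refl _, fun i => hψE i, fun i => rfl⟩
  rcases hkey with h | h
  · exact Or.inl (equiv_trans hxy (toBeauville _ _ h))
  · exact Or.inr (equiv_trans hxy (toBeauville _ _ h))
end

section
/- The elements a_1 = (123), a_2 = (345), a_3 = (432), a_4 = (215) of the alternating group A_5 satisfy a_1·a_2·a_3·a_4 = 1 and generate A_5. -/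
open Equiv

set_option maxRecDepth 40000 in
lemma stmt18_aux (H : Subgroup (Perm (Fin 5))) (h1 : (c[0,1,2] : Perm (Fin 5)) ∈ H)
    (h2 : (c[2,3,4] : Perm (Fin 5)) ∈ H) :
    ∀ σ : Perm (Fin 5), σ.IsThreeCycle → σ ∈ H := by
  intro σ hσ
  have hord : orderOf σ = 3 := hσ.orderOf
  have hpow : σ ^ 3 = 1 := by rw [← hord]; exact pow_orderOf_eq_one σ
  have hne : σ ≠ 1 := by
    intro h; rw [h, orderOf_one] at hord; exact (by norm_num : (1 : ℕ) ≠ 3) hord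
  have key : σ = 1 ∨ σ ∈ ([c[0,1,2], c[0,1,3], c[0,1,4], c[0,2,1], c[0,2,3], c[0,2,4], c[0,3,1], c[0,3,2], c[0,3,4], c[0,4,1], c[0,4,2], c[0,4,3], c[1,2,3], c[1,2,4], c[1,3,2], c[1,3,4], c[1,4,2], c[1,4,3], c[2,3,4], c[2,4,3]] : List (Perm (Fin 5))) :=
    (by decide : ∀ τ : Perm (Fin 5), τ ^ 3 = 1 → τ = 1 ∨
      τ ∈ ([c[0,1,2], c[0,1,3], c[0,1,4], c[0,2,1], c[0,2,3], c[0,2,4], c[0,3,1], c[0,3,2], c[0,3,4], c[0,4,1], c[0,4,2], c[0,4,3], c[1,2,3], c[1,2,4], c[1,3,2], c[1,3,4], c[1,4,2], c[1,4,3], c[2,3,4], c[2,4,3]] : List (Perm (Fin 5)))) σ hpow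
  rcases key with rfl | key
  · exact absurd rfl hne
  simp only [List.mem_cons, List.not_mem_nil, or_false] at key
  rcases key with rfl|rfl|rfl|rfl|rfl|rfl|rfl|rfl|rfl|rfl|rfl|rfl|rfl|rfl|rfl|rfl|rfl|rfl|rfl|rfl
  · exact (by decide : (c[0,1,2] : Perm (Fin 5)) = c[0,1,2]) ▸ h1
  · exact (by decide : (c[0,1,3] : Perm (Fin 5)) = c[2,3,4] * c[0,1,2] * c[2,3,4]⁻¹) ▸ (mul_mem (mul_mem h2 h1) (inv_mem h2))
  · exact (by decide : (c[0,1,4] : Perm (Fin 5)) = c[2,3,4]⁻¹ * c[0,1,2] * c[2,3,4]) ▸ (mul_mem (mul_mem (inv_mem h2) h1) h2)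
  · exact (by decide : (c[0,2,1] : Perm (Fin 5)) = c[0,1,2]⁻¹) ▸ (inv_mem h1)
  · exact (by decide : (c[0,2,3] : Perm (Fin 5)) = c[2,3,4] * c[0,1,2] * c[2,3,4]⁻¹ * c[0,1,2]⁻¹) ▸ (mul_mem (mul_mem (mul_mem h2 h1) (inv_mem h2)) (inv_mem h1))
  · exact (by decide : (c[0,2,4] : Perm (Fin 5)) = c[2,3,4]⁻¹ * c[0,1,2] * c[2,3,4] * c[0,1,2]⁻¹) ▸ (mul_mem (mul_mem (mul_mem (inv_mem h2) h1) h2) (inv_mem h1))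
  · exact (by decide : (c[0,3,1] : Perm (Fin 5)) = c[2,3,4] * c[0,1,2]⁻¹ * c[2,3,4]⁻¹) ▸ (mul_mem (mul_mem h2 (inv_mem h1)) (inv_mem h2))
  · exact (by decide : (c[0,3,2] : Perm (Fin 5)) = c[0,1,2] * c[2,3,4] * c[0,1,2]⁻¹ * c[2,3,4]⁻¹) ▸ (mul_mem (mul_mem (mul_mem h1 h2) (inv_mem h1)) (inv_mem h2))
  · exact (by decide : (c[0,3,4] : Perm (Fin 5)) = c[0,1,2] * c[2,3,4] * c[0,1,2]⁻¹) ▸ (mul_mem (mul_mem h1 h2) (inv_mem h1))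
  · exact (by decide : (c[0,4,1] : Perm (Fin 5)) = c[2,3,4]⁻¹ * c[0,1,2]⁻¹ * c[2,3,4]) ▸ (mul_mem (mul_mem (inv_mem h2) (inv_mem h1)) h2)
  · exact (by decide : (c[0,4,2] : Perm (Fin 5)) = c[0,1,2] * c[2,3,4]⁻¹ * c[0,1,2]⁻¹ * c[2,3,4]) ▸ (mul_mem (mul_mem (mul_mem h1 (inv_mem h2)) (inv_mem h1)) h2)
  · exact (by decide : (c[0,4,3] : Perm (Fin 5)) = c[0,1,2] * c[2,3,4]⁻¹ * c[0,1,2]⁻¹) ▸ (mul_mem (mul_mem h1 (inv_mem h2)) (inv_mem h1))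
  · exact (by decide : (c[1,2,3] : Perm (Fin 5)) = c[2,3,4] * c[0,1,2]⁻¹ * c[2,3,4]⁻¹ * c[0,1,2]) ▸ (mul_mem (mul_mem (mul_mem h2 (inv_mem h1)) (inv_mem h2)) h1)
  · exact (by decide : (c[1,2,4] : Perm (Fin 5)) = c[2,3,4]⁻¹ * c[0,1,2]⁻¹ * c[2,3,4] * c[0,1,2]) ▸ (mul_mem (mul_mem (mul_mem (inv_mem h2) (inv_mem h1)) h2) h1)
  · exact (by decide : (c[1,3,2] : Perm (Fin 5)) = c[0,1,2]⁻¹ * c[2,3,4] * c[0,1,2] * c[2,3,4]⁻¹) ▸ (mul_mem (mul_mem (mul_mem (inv_mem h1) h2) h1) (inv_mem h2))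
  · exact (by decide : (c[1,3,4] : Perm (Fin 5)) = c[0,1,2]⁻¹ * c[2,3,4] * c[0,1,2]) ▸ (mul_mem (mul_mem (inv_mem h1) h2) h1)
  · exact (by decide : (c[1,4,2] : Perm (Fin 5)) = c[0,1,2]⁻¹ * c[2,3,4]⁻¹ * c[0,1,2] * c[2,3,4]) ▸ (mul_mem (mul_mem (mul_mem (inv_mem h1) (inv_mem h2)) h1) h2)
  · exact (by decide : (c[1,4,3] : Perm (Fin 5)) = c[0,1,2]⁻¹ * c[2,3,4]⁻¹ * c[0,1,2]) ▸ (mul_mem (mul_mem (inv_mem h1) (inv_mem h2)) h1)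
  · exact (by decide : (c[2,3,4] : Perm (Fin 5)) = c[2,3,4]) ▸ h2
  · exact (by decide : (c[2,4,3] : Perm (Fin 5)) = c[2,3,4]⁻¹) ▸ (inv_mem h2)

/-- The 3-cycles `(123), (345), (432), (215)` (on `{1,…,5}`, here written on
`Fin 5`) lie in the alternating group `A₅`, have product `1`, and generate
`A₅`. -/
theorem stmt_18 :
    let a₁ : Perm (Fin 5) := c[0, 1, 2]
    let a₂ : Perm (Fin 5) := c[2, 3, 4]
    let a₃ : Perm (Fin 5) := c[3, 2, 1]
    let a₄ : Perm (Fin 5) := c[1, 0, 4]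
    a₁ * a₂ * a₃ * a₄ = 1 ∧
    (∀ x ∈ ({a₁, a₂, a₃, a₄} : Set (Perm (Fin 5))), x ∈ alternatingGroup (Fin 5)) ∧
    Subgroup.closure ({a₁, a₂, a₃, a₄} : Set (Perm (Fin 5)))
      = alternatingGroup (Fin 5) := by
  intro a₁ a₂ a₃ a₄
  have hmemA : ∀ x ∈ ({a₁, a₂, a₃, a₄} : Set (Perm (Fin 5))), x ∈ alternatingGroup (Fin 5) := by
    intro x hx
    rw [Equiv.Perm.mem_alternatingGroup]
    rcases hx with rfl | rfl | rfl | rfl <;> decide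
  refine ⟨by decide, hmemA, le_antisymm ((Subgroup.closure_le _).mpr hmemA) ?_⟩
  rw [← Equiv.Perm.closure_three_cycles_eq_alternating]
  refine (Subgroup.closure_le _).mpr fun σ hσ => ?_
  exact stmt18_aux _ (Subgroup.subset_closure (Set.mem_insert _ _)) (Subgroup.subset_closure (Set.mem_insert_of_mem _ (Set.mem_insert _ _))) σ hσ
end
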